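/- arXiv:2210.10708 — 4 statements merged into one kernel-verified Lean document; each statement's English description precedes it below -/
import Mathlib

section
/- Let H and K be finite groups with no common direct factor and G = H × K. Then every automorphism of G can be written as a product abcd where a ∈ A, b ∈ B, c ∈ C, d ∈ D, with A ≅ Aut(H), D ≅ Aut(K) acting componentwise, B the subgroup induced by homomorphisms K → Z(H), and C the subgroup induced by homomorphisms H → Z(K); moreover A × D normalizes both B and C. -/
/-- A common direct factor of two groups `H` and `K`: a nontrivial group `L`
together with decompositions `H ≃* L × M` and `K ≃* L × N`. -/
structure CommonDirectFactor (H K : Type) [Group H] [Group K] where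
  L : Type
  M : Type
  N : Type
  [grpL : Group L]
  [grpM : Group M]
  [grpN : Group N]
  nontrivial : Nontrivial L
  isoH : H ≃* L × M
  isoK : K ≃* L × N

/-- The subgroup-like set `A` of `Aut(H × K)`: automorphisms acting as an
automorphism of `H` on the first factor and as the identity on the second. -/
def autSetA (H K : Type) [Group H] [Group K] : Set (MulAut (H × K)) :=
  {θ | ∃ α : MulAut H, ∀ x : H × K, θ x = (α x.1, x.2)}

/-- The set `B`: automorphisms of the form `(h, k) ↦ (h * β k, k)` for a
homomorphism `β : K →* H` with central image. -/
def autSetB (H K : Type) [Group H] [Group K] : Set (MulAut (H × K)) :=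
  {θ | ∃ β : K →* H, (∀ k, β k ∈ Subgroup.center H) ∧
    ∀ x : H × K, θ x = (x.1 * β x.2, x.2)}

/-- The set `C`: automorphisms of the form `(h, k) ↦ (h, k * γ h)` for a
homomorphism `γ : H →* K` with central image. -/
def autSetC (H K : Type) [Group H] [Group K] : Set (MulAut (H × K)) :=
  {θ | ∃ γ : H →* K, (∀ h, γ h ∈ Subgroup.center K) ∧
    ∀ x : H × K, θ x = (x.1, x.2 * γ x.1)}

/-- The set `D`: automorphisms acting as the identity on the first factor and
as an automorphism of `K` on the second. -/
def autSetD (H K : Type) [Group H] [Group K] : Set (MulAut (H × K)) :=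
  {θ | ∃ δ : MulAut K, ∀ x : H × K, θ x = (x.1, δ x.2)}


namespace BCMaux

/-- idempotent power in a finite monoid -/
lemma exists_idem_pow {M : Type*} [Monoid M] [Finite M] (x : M) :
    ∃ n, 0 < n ∧ x ^ n * x ^ n = x ^ n := by
  obtain ⟨a, b, hab, h⟩ := Finite.exists_ne_map_eq_of_infinite (fun n : ℕ => x ^ (n + 1))
  wlog hlt : a < b generalizing a b
  · exact this b a hab.symm h.symm (by omega)
  set d := b - a with hd
  have hd1 : 0 < d := by omega
  have hbase : x ^ (a + 1) = x ^ (a + 1 + d) := by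
    rw [h]; congr 1; omega
  have hstep : ∀ m, a + 1 ≤ m → x ^ m = x ^ (m + d) := by
    intro m hm
    obtain ⟨c, rfl⟩ := Nat.exists_eq_add_of_le hm
    rw [pow_add, hbase, ← pow_add]; congr 1; omega
  have hrep : ∀ t m, a + 1 ≤ m → x ^ m = x ^ (m + t * d) := by
    intro t
    induction t with
    | zero => simp
    | succ s ih =>
      intro m hm
      rw [ih m hm, hstep (m + s * d) (by omega)]
      congr 1; ring
  refine ⟨(a + 1) * d, by positivity, ?_⟩
  rw [← pow_add]
  have := hrep (a + 1) ((a + 1) * d) (by nlinarith)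
  rw [← this]

lemma idem_pow_eq {M : Type*} [Monoid M] {z : M} (hz : z * z = z) :
    ∀ m, 0 < m → z ^ m = z := by
  intro m hm
  induction m with
  | zero => omega
  | succ s ih =>
    rcases Nat.eq_zero_or_pos s with hs | hs
    · simp [hs]
    · rw [pow_succ, ih hs, hz]

end BCMaux


namespace BCMaux

variable {H K : Type} [Group H] [Group K]

/-- first-component action on `H` of an automorphism of `H × K` -/
def mA (θ : MulAut (H × K)) : H →* H :=
  (MonoidHom.fst H K).comp (θ.toMonoidHom.comp (MonoidHom.inl H K))

def mG (θ : MulAut (H × K)) : H →* K :=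
  (MonoidHom.snd H K).comp (θ.toMonoidHom.comp (MonoidHom.inl H K))

def mB (θ : MulAut (H × K)) : K →* H :=
  (MonoidHom.fst H K).comp (θ.toMonoidHom.comp (MonoidHom.inr H K))

def mD (θ : MulAut (H × K)) : K →* K :=
  (MonoidHom.snd H K).comp (θ.toMonoidHom.comp (MonoidHom.inr H K))

lemma apply_inl (θ : MulAut (H × K)) (h : H) : θ (h, 1) = (mA θ h, mG θ h) := rfl

lemma apply_inr (θ : MulAut (H × K)) (k : K) : θ (1, k) = (mB θ k, mD θ k) := rfl

lemma apply_eq (θ : MulAut (H × K)) (h : H) (k : K) :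
    θ (h, k) = (mA θ h * mB θ k, mG θ h * mD θ k) := by
  have h1 : ((h, k) : H × K) = (h, 1) * (1, k) := by simp
  rw [h1, map_mul, apply_inl, apply_inr, Prod.mk_mul_mk]

lemma commAB (θ : MulAut (H × K)) (h : H) (k : K) : Commute (mA θ h) (mB θ k) := by
  have h1 : θ (h, 1) * θ (1, k) = θ (1, k) * θ (h, 1) := by
    rw [← map_mul, ← map_mul]
    congr 1
    simp [Prod.ext_iff]
  rw [apply_inl, apply_inr, Prod.mk_mul_mk, Prod.mk_mul_mk, Prod.mk.injEq] at h1
  exact h1.1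

lemma commGD (θ : MulAut (H × K)) (h : H) (k : K) : Commute (mG θ h) (mD θ k) := by
  have h1 : θ (h, 1) * θ (1, k) = θ (1, k) * θ (h, 1) := by
    rw [← map_mul, ← map_mul]
    congr 1
    simp [Prod.ext_iff]
  rw [apply_inl, apply_inr, Prod.mk_mul_mk, Prod.mk_mul_mk, Prod.mk.injEq] at h1
  exact h1.2

lemma cancel_inr (θ φ : MulAut (H × K)) (hc : ∀ x, φ (θ x) = x) (k : K) :
    mA φ (mB θ k) * mB φ (mD θ k) = 1 ∧ mG φ (mB θ k) * mD φ (mD θ k) = k := by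
  have h1 : φ (θ (1, k)) = (1, k) := hc _
  rw [apply_inr, apply_eq, Prod.mk.injEq] at h1
  exact h1

lemma cancel_inl (θ φ : MulAut (H × K)) (hc : ∀ x, φ (θ x) = x) (h : H) :
    mA φ (mA θ h) * mB φ (mG θ h) = h ∧ mG φ (mA θ h) * mD φ (mG θ h) = 1 := by
  have h1 : φ (θ (h, 1)) = (h, 1) := hc _
  rw [apply_inl, apply_eq, Prod.mk.injEq] at h1
  exact h1

end BCMaux


namespace BCMaux

section EndLemmas
variable {M : Type*} [MulOneClass M]

lemma end_pow_succ_apply (g : Monoid.End M) (m : ℕ) (x : M) :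
    (g ^ (m + 1)) x = (g ^ m) (g x) := by rw [pow_succ]; rfl

lemma end_pow_succ_apply' (g : Monoid.End M) (m : ℕ) (x : M) :
    (g ^ (m + 1)) x = g ((g ^ m) x) := by rw [pow_succ']; rfl

lemma end_pow_comm (g : Monoid.End M) (m n : ℕ) (x : M) :
    (g ^ m) ((g ^ n) x) = (g ^ n) ((g ^ m) x) := by
  have h1 : ∀ a b : ℕ, (g ^ a) ((g ^ b) x) = (g ^ (a + b)) x := by
    intro a b
    rw [pow_add]
    rfl
  rw [h1, h1, Nat.add_comm]

end EndLemmas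

variable {H K : Type} [Group H] [Group K]

/-- `δ' ∘ δ` as an endomorphism of `K`. -/
def sigK (θ : MulAut (H × K)) : Monoid.End K := ((mD θ.symm).comp (mD θ) : K →* K)

/-- `α ∘ α'` as an endomorphism of `H`. -/
def sigH (θ : MulAut (H × K)) : Monoid.End H := ((mA θ).comp (mA θ.symm) : H →* H)

lemma sigK_apply (θ : MulAut (H × K)) (k : K) : sigK θ k = mD θ.symm (mD θ k) := rfl

lemma sigH_apply (θ : MulAut (H × K)) (h : H) : sigH θ h = mA θ (mA θ.symm h) := rfl

lemma I1 (θ : MulAut (H × K)) (k : K) : mG θ.symm (mB θ k) * sigK θ k = k :=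
  (cancel_inr θ θ.symm (fun x => θ.symm_apply_apply x) k).2

lemma IH1 (θ : MulAut (H × K)) (h : H) : sigH θ h * mB θ (mG θ.symm h) = h :=
  (cancel_inl θ.symm θ (fun x => θ.apply_symm_apply x) h).1

lemma sigH_mB (θ : MulAut (H × K)) (k : K) : sigH θ (mB θ k) = mB θ (sigK θ k) := by
  have e1 : mA θ.symm (mB θ k) = (mB θ.symm (mD θ k))⁻¹ :=
    mul_eq_one_iff_eq_inv.mp (cancel_inr θ θ.symm (fun x => θ.symm_apply_apply x) k).1
  have e2 : mA θ (mB θ.symm (mD θ k)) = (mB θ (mD θ.symm (mD θ k)))⁻¹ :=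
    mul_eq_one_iff_eq_inv.mp (cancel_inr θ.symm θ (fun x => θ.apply_symm_apply x) (mD θ k)).1
  rw [sigH_apply, e1, map_inv, e2, inv_inv, sigK_apply]

lemma mGsymm_sigH (θ : MulAut (H × K)) (h : H) :
    mG θ.symm (sigH θ h) = sigK θ (mG θ.symm h) := by
  have e1 : mG θ.symm (mA θ (mA θ.symm h)) = (mD θ.symm (mG θ (mA θ.symm h)))⁻¹ :=
    mul_eq_one_iff_eq_inv.mp (cancel_inl θ θ.symm (fun x => θ.symm_apply_apply x) (mA θ.symm h)).2
  have e2 : mG θ (mA θ.symm h) = (mD θ (mG θ.symm h))⁻¹ :=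
    mul_eq_one_iff_eq_inv.mp (cancel_inl θ.symm θ (fun x => θ.apply_symm_apply x) h).2
  rw [sigH_apply, e1, e2, map_inv, inv_inv, sigK_apply]

lemma sigK_conj (θ : MulAut (H × K)) (x k : K) :
    sigK θ (x * k * x⁻¹) = x * sigK θ k * x⁻¹ := by
  have hmid : sigK θ x * sigK θ k * (sigK θ x)⁻¹
      = mD θ.symm (mD θ x * mD θ k * (mD θ x)⁻¹) := by
    simp only [map_mul, map_inv, sigK_apply]
  have key : Commute (mG θ.symm (mB θ x)) (sigK θ x * sigK θ k * (sigK θ x)⁻¹) := by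
    rw [hmid]; exact commGD θ.symm _ _
  calc sigK θ (x * k * x⁻¹) = sigK θ x * sigK θ k * (sigK θ x)⁻¹ := by
        rw [map_mul, map_mul, map_inv]
    _ = mG θ.symm (mB θ x) * (sigK θ x * sigK θ k * (sigK θ x)⁻¹) * (mG θ.symm (mB θ x))⁻¹ := by
        rw [key.eq, mul_inv_cancel_right]
    _ = (mG θ.symm (mB θ x) * sigK θ x) * sigK θ k * (mG θ.symm (mB θ x) * sigK θ x)⁻¹ := by
        group
    _ = x * sigK θ k * x⁻¹ := by rw [I1 θ x]

lemma sigH_conj (θ : MulAut (H × K)) (x h : H) :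
    sigH θ (x * h * x⁻¹) = x * sigH θ h * x⁻¹ := by
  have kc : Commute (sigH θ h) (mB θ (mG θ.symm x)) := commAB θ _ _
  calc sigH θ (x * h * x⁻¹) = sigH θ x * sigH θ h * (sigH θ x)⁻¹ := by
        rw [map_mul, map_mul, map_inv]
    _ = sigH θ x * (mB θ (mG θ.symm x) * sigH θ h * (mB θ (mG θ.symm x))⁻¹) * (sigH θ x)⁻¹ := by
        rw [kc.symm.eq, mul_inv_cancel_right]
    _ = (sigH θ x * mB θ (mG θ.symm x)) * sigH θ h * (sigH θ x * mB θ (mG θ.symm x))⁻¹ := by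
        group
    _ = x * sigH θ h * x⁻¹ := by rw [IH1 θ x]

lemma sigH_pow_mB (θ : MulAut (H × K)) (m : ℕ) (k : K) :
    (sigH θ ^ m) (mB θ k) = mB θ ((sigK θ ^ m) k) := by
  induction m generalizing k with
  | zero => simp
  | succ s ih =>
    rw [end_pow_succ_apply, sigH_mB, ih (sigK θ k), ← end_pow_succ_apply]

lemma mGsymm_sigH_pow (θ : MulAut (H × K)) (m : ℕ) (h : H) :
    mG θ.symm ((sigH θ ^ m) h) = (sigK θ ^ m) (mG θ.symm h) := by
  induction m with
  | zero => simp
  | succ s ih =>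
    rw [end_pow_succ_apply', mGsymm_sigH, ih, ← end_pow_succ_apply']

lemma sigK_pow_conj (θ : MulAut (H × K)) (m : ℕ) (x k : K) :
    (sigK θ ^ m) (x * k * x⁻¹) = x * (sigK θ ^ m) k * x⁻¹ := by
  induction m generalizing k with
  | zero => simp
  | succ s ih =>
    rw [end_pow_succ_apply, sigK_conj, ih (sigK θ k), ← end_pow_succ_apply]

lemma sigH_pow_conj (θ : MulAut (H × K)) (m : ℕ) (x h : H) :
    (sigH θ ^ m) (x * h * x⁻¹) = x * (sigH θ ^ m) h * x⁻¹ := by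
  induction m generalizing h with
  | zero => simp
  | succ s ih =>
    rw [end_pow_succ_apply, sigH_conj, ih (sigH θ h), ← end_pow_succ_apply]

end BCMaux


namespace BCMaux

variable {H K : Type} [Group H] [Group K]

theorem delta_injective (H K : Type) [Group H] [Group K] [Finite H] [Finite K]
    (hnc : IsEmpty (CommonDirectFactor H K)) (θ : MulAut (H × K)) :
    Function.Injective fun k : K => (θ (1, k)).2 := by
  classical
  have finK : Finite (Monoid.End K) :=
    Finite.of_injective (fun (g : Monoid.End K) => (g : K → K)) DFunLike.coe_injective
  have finH : Finite (Monoid.End H) :=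
    Finite.of_injective (fun (g : Monoid.End H) => (g : H → H)) DFunLike.coe_injective
  obtain ⟨n₁, hn₁, hid₁⟩ := exists_idem_pow (sigK θ)
  obtain ⟨n₂, hn₂, hid₂⟩ := exists_idem_pow (sigH θ)
  have hnpos : 0 < n₁ * n₂ := Nat.mul_pos hn₁ hn₂
  set n : ℕ := n₁ * n₂ with hndef
  have hσidem : sigK θ ^ n * sigK θ ^ n = sigK θ ^ n := by
    rw [hndef, pow_mul, idem_pow_eq hid₁ n₂ hn₂]
    exact hid₁
  have hfidem : sigH θ ^ n * sigH θ ^ n = sigH θ ^ n := by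
    rw [hndef, Nat.mul_comm n₁ n₂, pow_mul, idem_pow_eq hid₂ n₁ hn₁]
    exact hid₂
  -- idempotent endomorphisms
  set eK : K →* K := MonoidHom.mk' (fun x => (sigK θ ^ n) x) (fun a b => map_mul _ a b)
    with heKdef
  set eH : H →* H := MonoidHom.mk' (fun x => (sigH θ ^ n) x) (fun a b => map_mul _ a b)
    with heHdef
  have eKapp : ∀ k, eK k = (sigK θ ^ n) k := fun _ => rfl
  have eHapp : ∀ h, eH h = (sigH θ ^ n) h := fun _ => rfl
  have heK2 : ∀ k, eK (eK k) = eK k := by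
    intro k
    have h1 : (sigK θ ^ n * sigK θ ^ n) k = (sigK θ ^ n) ((sigK θ ^ n) k) := rfl
    rw [eKapp, eKapp, ← h1, hσidem]
  have heH2 : ∀ h, eH (eH h) = eH h := by
    intro h
    have h1 : (sigH θ ^ n * sigH θ ^ n) h = (sigH θ ^ n) ((sigH θ ^ n) h) := rfl
    rw [eHapp, eHapp, ← h1, hfidem]
  -- subgroups
  set NK : Subgroup K := MonoidHom.ker eK with hNKdef
  set EK : Subgroup K := MonoidHom.range eK with hEKdef
  set MH : Subgroup H := MonoidHom.ker eH with hMHdef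
  set EH : Subgroup H := MonoidHom.range eH with hEHdef
  have hNKmem : ∀ k, k ∈ NK ↔ eK k = 1 := fun k => eK.mem_ker
  have hMHmem : ∀ h, h ∈ MH ↔ eH h = 1 := fun h => eH.mem_ker
  have hEKnorm : EK.Normal := by
    constructor
    intro m hm g
    obtain ⟨k, hk⟩ := hm
    refine ⟨g * k * g⁻¹, ?_⟩
    rw [eKapp, sigK_pow_conj, ← eKapp, hk]
  have hEHnorm : EH.Normal := by
    constructor
    intro m hm g
    obtain ⟨h, hh⟩ := hm
    refine ⟨g * h * g⁻¹, ?_⟩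
    rw [eHapp, sigH_pow_conj, ← eHapp, hh]
  have hdisjK : Disjoint NK EK := by
    rw [Subgroup.disjoint_def]
    intro x hx1 hx2
    obtain ⟨y, hy⟩ := hx2
    have h2 : eK x = x := by rw [← hy, heK2]
    rw [(hNKmem x).mp hx1] at h2
    exact h2.symm
  have hdisjH : Disjoint MH EH := by
    rw [Subgroup.disjoint_def]
    intro x hx1 hx2
    obtain ⟨y, hy⟩ := hx2
    have h2 : eH x = x := by rw [← hy, heH2]
    rw [(hMHmem x).mp hx1] at h2
    exact h2.symm
  -- the decomposition K ≃* NK × EK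
  have hcommK : ∀ (a : NK) (b : EK), Commute (NK.subtype a) (EK.subtype b) := fun a b =>
    Subgroup.commute_of_normal_of_disjoint NK EK inferInstance hEKnorm hdisjK a b a.2 b.2
  have hcommH : ∀ (a : MH) (b : EH), Commute (MH.subtype a) (EH.subtype b) := fun a b =>
    Subgroup.commute_of_normal_of_disjoint MH EH inferInstance hEHnorm hdisjH a b a.2 b.2
  set φK : NK × EK →* K := MonoidHom.noncommCoprod NK.subtype EK.subtype hcommK with hφKdef
  set φH : MH × EH →* H := MonoidHom.noncommCoprod MH.subtype EH.subtype hcommH with hφHdef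
  have φKapp : ∀ p : NK × EK, φK p = (p.1 : K) * (p.2 : K) := fun _ => rfl
  have φHapp : ∀ p : MH × EH, φH p = (p.1 : H) * (p.2 : H) := fun _ => rfl
  have hφKbij : Function.Bijective φK := by
    constructor
    · rw [injective_iff_map_eq_one]
      rintro ⟨a, b⟩ hab
      rw [φKapp] at hab
      have hb : (a : K) = (b : K)⁻¹ := mul_eq_one_iff_eq_inv.mp hab
      have ha1 : (a : K) = 1 :=
        Subgroup.disjoint_def.mp hdisjK a.2 (by rw [hb]; exact EK.inv_mem b.2)
      have hb1 : (b : K) = 1 := by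
        rw [ha1, one_mul] at hab; exact hab
      have : ((⟨a, b⟩ : NK × EK) : NK × EK) = (1, 1) :=
        Prod.ext (Subtype.ext ha1) (Subtype.ext hb1)
      exact this
    · intro k
      refine ⟨(⟨k * (eK k)⁻¹, ?_⟩, ⟨eK k, ⟨k, rfl⟩⟩), ?_⟩
      · exact (hNKmem _).mpr (by rw [map_mul, map_inv, heK2, mul_inv_cancel])
      · rw [φKapp]
        exact inv_mul_cancel_right _ _
  have hφHbij : Function.Bijective φH := by
    constructor
    · rw [injective_iff_map_eq_one]
      rintro ⟨a, b⟩ hab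
      rw [φHapp] at hab
      have hb : (a : H) = (b : H)⁻¹ := mul_eq_one_iff_eq_inv.mp hab
      have ha1 : (a : H) = 1 :=
        Subgroup.disjoint_def.mp hdisjH a.2 (by rw [hb]; exact EH.inv_mem b.2)
      have hb1 : (b : H) = 1 := by
        rw [ha1, one_mul] at hab; exact hab
      have : ((⟨a, b⟩ : MH × EH) : MH × EH) = (1, 1) :=
        Prod.ext (Subtype.ext ha1) (Subtype.ext hb1)
      exact this
    · intro h
      refine ⟨(⟨h * (eH h)⁻¹, ?_⟩, ⟨eH h, ⟨h, rfl⟩⟩), ?_⟩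
      · exact (hMHmem _).mpr (by rw [map_mul, map_inv, heH2, mul_inv_cancel])
      · rw [φHapp]
        exact inv_mul_cancel_right _ _
  -- the restriction of β to NK lands in MH and is bijective onto it
  have hBmem : ∀ k : K, k ∈ NK → mB θ k ∈ MH := by
    intro k hk
    refine (hMHmem _).mpr ?_
    rw [eHapp, sigH_pow_mB, ← eKapp, (hNKmem k).mp hk, map_one]
  set βr : NK →* MH :=
    MonoidHom.codRestrict ((mB θ).comp NK.subtype) MH (fun x => hBmem x x.2) with hβrdef
  have βrapp : ∀ x : NK, (βr x : H) = mB θ (x : K) := fun _ => rfl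
  have hβinj : Function.Injective βr := by
    rw [injective_iff_map_eq_one]
    intro x hx
    have hBx : mB θ (x : K) = 1 := by
      rw [← βrapp, hx]
      rfl
    have hσx : sigK θ (x : K) = (x : K) := by
      have h2 := I1 θ (x : K)
      rwa [hBx, map_one, one_mul] at h2
    have hfix : ∀ m, (sigK θ ^ m) (x : K) = (x : K) := by
      intro m
      induction m with
      | zero => simp
      | succ s ih => rw [end_pow_succ_apply, hσx, ih]
    have hx1 : (x : K) = 1 := by
      have h1 := (hNKmem _).mp x.2
      rwa [eKapp, hfix] at h1
    exact Subtype.ext hx1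
  have hβsurj : Function.Surjective βr := by
    intro y
    have main : ∀ m : ℕ, ∀ h : H, eH h = 1 →
        h * ((sigH θ ^ m) h)⁻¹ ∈ Subgroup.map (mB θ) NK := by
      intro m
      induction m with
      | zero =>
        intro h hh
        have h0 : ((sigH θ ^ 0) h) = h := by simp
        rw [h0, mul_inv_cancel]
        exact Subgroup.one_mem _
      | succ s ih =>
        intro h hh
        have hsplit : ∀ z : H, z * (sigH θ z)⁻¹ = mB θ (mG θ.symm z) := by
          intro z
          have kc : Commute (sigH θ z) (mB θ (mG θ.symm z)) := commAB θ _ _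
          have h2 := IH1 θ z
          rw [kc.eq] at h2
          exact (eq_mul_inv_of_mul_eq h2).symm
        have hdecomp : h * ((sigH θ ^ (s + 1)) h)⁻¹
            = (h * ((sigH θ ^ s) h)⁻¹) * (((sigH θ ^ s) h) * (sigH θ ((sigH θ ^ s) h))⁻¹) := by
          rw [end_pow_succ_apply']
          group
        rw [hdecomp]
        apply Subgroup.mul_mem
        · exact ih h hh
        · rw [hsplit ((sigH θ ^ s) h), mGsymm_sigH_pow]
          refine Subgroup.mem_map.mpr ⟨(sigK θ ^ s) (mG θ.symm h), ?_, rfl⟩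
          have hG'h : eK (mG θ.symm h) = 1 := by
            rw [eKapp, ← mGsymm_sigH_pow, ← eHapp, hh, map_one]
          refine (hNKmem _).mpr ?_
          rw [eKapp, end_pow_comm, ← eKapp, hG'h, map_one]
    have hfn1 : (sigH θ ^ n) (y : H) = 1 := by
      rw [← eHapp]
      exact (hMHmem _).mp y.2
    have hy := main n (y : H) ((hMHmem _).mp y.2)
    rw [hfn1, inv_one, mul_one] at hy
    obtain ⟨x, hxN, hxB⟩ := Subgroup.mem_map.mp hy
    exact ⟨⟨x, hxN⟩, Subtype.ext (by rw [βrapp]; exact hxB)⟩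
  -- no common direct factor forces NK = ⊥
  have hNKbot : ∀ k : K, eK k = 1 → k = 1 := by
    by_contra hcon
    push_neg at hcon
    obtain ⟨k0, hk0e, hk0ne⟩ := hcon
    have hnontriv : Nontrivial NK :=
      ⟨⟨⟨k0, (hNKmem _).mpr hk0e⟩, 1, by simp [Subtype.ext_iff, hk0ne]⟩⟩
    exact hnc.false
      { L := NK
        M := EH
        N := EK
        nontrivial := hnontriv
        isoH := ((MulEquiv.ofBijective φH hφHbij).symm).trans
          (MulEquiv.prodCongr (MulEquiv.ofBijective βr ⟨hβinj, hβsurj⟩).symm (MulEquiv.refl EH))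
        isoK := (MulEquiv.ofBijective φK hφKbij).symm }
  -- conclude
  have hfun : (fun k : K => (θ (1, k)).2) = ⇑(mD θ) := rfl
  rw [hfun, injective_iff_map_eq_one]
  intro k hk
  apply hNKbot
  have hσ1 : sigK θ k = 1 := by rw [sigK_apply, hk, map_one]
  obtain ⟨m, hm⟩ : ∃ m, n = m + 1 := ⟨n - 1, by omega⟩
  rw [eKapp, hm, end_pow_succ_apply, hσ1, map_one]

end BCMaux


/-- Swap the two sides of a common direct factor. -/
def CommonDirectFactor.swap {H K : Type} [Group H] [Group K]
    (w : CommonDirectFactor H K) : CommonDirectFactor K H :=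
  { L := w.L, M := w.N, N := w.M, grpL := w.grpL, grpM := w.grpN, grpN := w.grpM,
    nontrivial := w.nontrivial, isoH := w.isoK, isoK := w.isoH }

namespace BCMaux

variable {H K : Type} [Group H] [Group K]

lemma center_map (φ : H ≃* H) {z : H} (hz : z ∈ Subgroup.center H) :
    φ z ∈ Subgroup.center H := by
  rw [Subgroup.mem_center_iff]
  intro g
  have hc := Subgroup.mem_center_iff.mp hz (φ.symm g)
  calc g * φ z = φ (φ.symm g * z) := by rw [map_mul, φ.apply_symm_apply]
    _ = φ (z * φ.symm g) := by rw [hc]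
    _ = φ z * g := by rw [map_mul, φ.apply_symm_apply]

/-- The automorphism `(h, k) ↦ (h * β k, k)` for central-valued `β`. -/
def centralAutB (β : K →* H) (hβ : ∀ k, β k ∈ Subgroup.center H) : MulAut (H × K) where
  toFun x := (x.1 * β x.2, x.2)
  invFun x := (x.1 * (β x.2)⁻¹, x.2)
  left_inv x := by simp
  right_inv x := by simp
  map_mul' x y := by
    have hc : y.1 * β x.2 = β x.2 * y.1 := Subgroup.mem_center_iff.mp (hβ x.2) y.1
    simp only [Prod.fst_mul, Prod.snd_mul, map_mul, Prod.mk_mul_mk, Prod.mk.injEq]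
    refine ⟨?_, trivial⟩
    calc x.1 * y.1 * (β x.2 * β y.2) = x.1 * (y.1 * β x.2) * β y.2 := by group
      _ = x.1 * (β x.2 * y.1) * β y.2 := by rw [hc]
      _ = x.1 * β x.2 * (y.1 * β y.2) := by group

/-- The automorphism `(h, k) ↦ (h, k * γ h)` for central-valued `γ`. -/
def centralAutC (γ : H →* K) (hγ : ∀ h, γ h ∈ Subgroup.center K) : MulAut (H × K) where
  toFun x := (x.1, x.2 * γ x.1)
  invFun x := (x.1, x.2 * (γ x.1)⁻¹)
  left_inv x := by simp
  right_inv x := by simp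
  map_mul' x y := by
    have hc : y.2 * γ x.1 = γ x.1 * y.2 := Subgroup.mem_center_iff.mp (hγ x.1) y.2
    simp only [Prod.fst_mul, Prod.snd_mul, map_mul, Prod.mk_mul_mk, Prod.mk.injEq]
    refine ⟨trivial, ?_⟩
    calc x.2 * y.2 * (γ x.1 * γ y.1) = x.2 * (y.2 * γ x.1) * γ y.1 := by group
      _ = x.2 * (γ x.1 * y.2) * γ y.1 := by rw [hc]
      _ = x.2 * γ x.1 * (y.2 * γ y.1) := by group

/-- pointwise product of two central-valued homs -/
def centralProdHom (β₁ β₂ : K →* H) (h₁ : ∀ k, β₁ k ∈ Subgroup.center H) : K →* H :=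
  MonoidHom.mk' (fun k => β₂ k * β₁ k) (by
    intro x y
    have hc : β₂ y * β₁ x = β₁ x * β₂ y :=
      Subgroup.mem_center_iff.mp (h₁ x) (β₂ y)
    show β₂ (x * y) * β₁ (x * y) = β₂ x * β₁ x * (β₂ y * β₁ y)
    rw [map_mul, map_mul]
    calc β₂ x * β₂ y * (β₁ x * β₁ y) = β₂ x * (β₂ y * β₁ x) * β₁ y := by group
      _ = β₂ x * (β₁ x * β₂ y) * β₁ y := by rw [hc]
      _ = β₂ x * β₁ x * (β₂ y * β₁ y) := by group)

/-- pointwise inverse of a central-valued hom -/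
def centralInvHom (β : K →* H) (hβ : ∀ k, β k ∈ Subgroup.center H) : K →* H :=
  MonoidHom.mk' (fun k => (β k)⁻¹) (by
    intro x y
    have hc : β x * β y = β y * β x := Subgroup.mem_center_iff.mp (hβ y) (β x)
    show (β (x * y))⁻¹ = (β x)⁻¹ * (β y)⁻¹
    rw [map_mul, hc, mul_inv_rev])

/-- `autSetA` as a subgroup. -/
def subA (H K : Type) [Group H] [Group K] : Subgroup (MulAut (H × K)) where
  carrier := autSetA H K
  one_mem' := ⟨MulEquiv.refl H, fun x => rfl⟩
  mul_mem' := by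
    rintro θ₁ θ₂ ⟨a₁, h₁⟩ ⟨a₂, h₂⟩
    refine ⟨a₁ * a₂, fun x => ?_⟩
    rw [MulAut.mul_apply, h₂, h₁]
    rfl
  inv_mem' := by
    rintro θ ⟨a, ha⟩
    refine ⟨a⁻¹, fun x => ?_⟩
    have h2 : θ (a⁻¹ x.1, x.2) = x := by
      rw [ha]
      show (a (a⁻¹ x.1), x.2) = x
      rw [MulAut.apply_inv_self]
    calc θ⁻¹ x = θ⁻¹ (θ (a⁻¹ x.1, x.2)) := by rw [h2]
      _ = (a⁻¹ x.1, x.2) := MulAut.inv_apply_self _ θ _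

/-- `autSetD` as a subgroup. -/
def subD (H K : Type) [Group H] [Group K] : Subgroup (MulAut (H × K)) where
  carrier := autSetD H K
  one_mem' := ⟨MulEquiv.refl K, fun x => rfl⟩
  mul_mem' := by
    rintro θ₁ θ₂ ⟨a₁, h₁⟩ ⟨a₂, h₂⟩
    refine ⟨a₁ * a₂, fun x => ?_⟩
    rw [MulAut.mul_apply, h₂, h₁]
    rfl
  inv_mem' := by
    rintro θ ⟨a, ha⟩
    refine ⟨a⁻¹, fun x => ?_⟩
    have h2 : θ (x.1, a⁻¹ x.2) = x := by
      rw [ha]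
      show (x.1, a (a⁻¹ x.2)) = x
      rw [MulAut.apply_inv_self]
    calc θ⁻¹ x = θ⁻¹ (θ (x.1, a⁻¹ x.2)) := by rw [h2]
      _ = (x.1, a⁻¹ x.2) := MulAut.inv_apply_self _ θ _

/-- `autSetB` as a subgroup. -/
def subB (H K : Type) [Group H] [Group K] : Subgroup (MulAut (H × K)) where
  carrier := autSetB H K
  one_mem' := ⟨1, fun k => by simp only [MonoidHom.one_apply]; exact Subgroup.one_mem _, fun x => by simp⟩
  mul_mem' := by
    rintro θ₁ θ₂ ⟨β₁, hc₁, h₁⟩ ⟨β₂, hc₂, h₂⟩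
    refine ⟨centralProdHom β₁ β₂ hc₁, fun k => Subgroup.mul_mem _ (hc₂ k) (hc₁ k), fun x => ?_⟩
    rw [MulAut.mul_apply, h₂, h₁]
    show (x.1 * β₂ x.2 * β₁ x.2, x.2) = (x.1 * (β₂ x.2 * β₁ x.2), x.2)
    rw [mul_assoc]
  inv_mem' := by
    rintro θ ⟨β, hcβ, hβ⟩
    refine ⟨centralInvHom β hcβ, fun k => Subgroup.inv_mem _ (hcβ k), fun x => ?_⟩
    have h2 : θ (x.1 * (β x.2)⁻¹, x.2) = x := by
      rw [hβ]
      show (x.1 * (β x.2)⁻¹ * β x.2, x.2) = x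
      rw [inv_mul_cancel_right]
    calc θ⁻¹ x = θ⁻¹ (θ (x.1 * (β x.2)⁻¹, x.2)) := by rw [h2]
      _ = (x.1 * (β x.2)⁻¹, x.2) := MulAut.inv_apply_self _ θ _

/-- pointwise product of two central-valued homs, `C`-side -/
def centralProdHomC (γ₁ γ₂ : H →* K) (h₁ : ∀ h, γ₁ h ∈ Subgroup.center K) : H →* K :=
  MonoidHom.mk' (fun h => γ₂ h * γ₁ h) (by
    intro x y
    have hc : γ₂ y * γ₁ x = γ₁ x * γ₂ y :=
      Subgroup.mem_center_iff.mp (h₁ x) (γ₂ y)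
    show γ₂ (x * y) * γ₁ (x * y) = γ₂ x * γ₁ x * (γ₂ y * γ₁ y)
    rw [map_mul, map_mul]
    calc γ₂ x * γ₂ y * (γ₁ x * γ₁ y) = γ₂ x * (γ₂ y * γ₁ x) * γ₁ y := by group
      _ = γ₂ x * (γ₁ x * γ₂ y) * γ₁ y := by rw [hc]
      _ = γ₂ x * γ₁ x * (γ₂ y * γ₁ y) := by group)

/-- pointwise inverse of a central-valued hom, `C`-side -/
def centralInvHomC (γ : H →* K) (hγ : ∀ h, γ h ∈ Subgroup.center K) : H →* K :=
  MonoidHom.mk' (fun h => (γ h)⁻¹) (by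
    intro x y
    have hc : γ x * γ y = γ y * γ x := Subgroup.mem_center_iff.mp (hγ y) (γ x)
    show (γ (x * y))⁻¹ = (γ x)⁻¹ * (γ y)⁻¹
    rw [map_mul, hc, mul_inv_rev])

/-- `autSetC` as a subgroup. -/
def subC (H K : Type) [Group H] [Group K] : Subgroup (MulAut (H × K)) where
  carrier := autSetC H K
  one_mem' := ⟨1, fun h => by simp only [MonoidHom.one_apply]; exact Subgroup.one_mem _, fun x => by simp⟩
  mul_mem' := by
    rintro θ₁ θ₂ ⟨γ₁, hc₁, h₁⟩ ⟨γ₂, hc₂, h₂⟩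
    refine ⟨centralProdHomC γ₁ γ₂ hc₁, fun h => Subgroup.mul_mem _ (hc₂ h) (hc₁ h), fun x => ?_⟩
    rw [MulAut.mul_apply, h₂, h₁]
    show (x.1, x.2 * γ₂ x.1 * γ₁ x.1) = (x.1, x.2 * (γ₂ x.1 * γ₁ x.1))
    rw [mul_assoc]
  inv_mem' := by
    rintro θ ⟨γ, hcγ, hγ⟩
    refine ⟨centralInvHomC γ hcγ, fun h => Subgroup.inv_mem _ (hcγ h), fun x => ?_⟩
    have h2 : θ (x.1, x.2 * (γ x.1)⁻¹) = x := by
      rw [hγ]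
      show (x.1, x.2 * (γ x.1)⁻¹ * γ x.1) = x
      rw [inv_mul_cancel_right]
    calc θ⁻¹ x = θ⁻¹ (θ (x.1, x.2 * (γ x.1)⁻¹)) := by rw [h2]
      _ = (x.1, x.2 * (γ x.1)⁻¹) := MulAut.inv_apply_self _ θ _

end BCMaux


namespace BCMaux

variable {H K : Type} [Group H] [Group K]

theorem decomposition (H K : Type) [Group H] [Group K] [Finite H] [Finite K]
    (hnc : IsEmpty (CommonDirectFactor H K)) (θ : MulAut (H × K)) :
    ∃ a ∈ autSetA H K, ∃ b ∈ autSetB H K, ∃ c ∈ autSetC H K, ∃ d ∈ autSetD H K,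
      θ = a * b * c * d := by
  classical
  -- δ is injective
  have hδinj : Function.Injective ⇑(mD θ) := delta_injective H K hnc θ
  -- α is injective, via the swapped automorphism
  set cs : (H × K) ≃* (K × H) := MulEquiv.prodComm with hcsdef
  set θsw : MulAut (K × H) := (cs.symm.trans θ).trans cs with hθswdef
  have hncsw : IsEmpty (CommonDirectFactor K H) := ⟨fun w => hnc.false w.swap⟩
  have hαinj0 := delta_injective K H hncsw θsw
  have hαinj : Function.Injective ⇑(mA θ) := by
    have hfe : (fun h : H => (θsw (1, h)).2) = ⇑(mA θ) := by
      funext h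
      show (cs (θ (cs.symm (1, h)))).2 = (θ (h, 1)).1
      rfl
    rw [← hfe]
    exact hαinj0
  have hαbij : Function.Bijective ⇑(mA θ) := Finite.injective_iff_bijective.mp hαinj
  have hδbij : Function.Bijective ⇑(mD θ) := Finite.injective_iff_bijective.mp hδinj
  set δe : K ≃* K := MulEquiv.ofBijective (mD θ) hδbij with hδedef
  have hδeapp : ∀ k, δe k = mD θ k := fun _ => rfl
  -- centrality of β and γ
  have hβZ : ∀ k, mB θ k ∈ Subgroup.center H := by
    intro k
    rw [Subgroup.mem_center_iff]
    intro g
    obtain ⟨h, rfl⟩ := hαbij.2 g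
    exact (commAB θ h k).eq
  have hγZ : ∀ h, mG θ h ∈ Subgroup.center K := by
    intro h
    rw [Subgroup.mem_center_iff]
    intro g
    obtain ⟨k, rfl⟩ := hδbij.2 g
    exact ((commGD θ h k).symm).eq
  -- the corrected first-component automorphism
  set w : H →* H := (mB θ).comp (δe.symm.toMonoidHom.comp (mG θ)) with hwdef
  have hwapp : ∀ h, w h = mB θ (δe.symm (mG θ h)) := fun _ => rfl
  have hwZ : ∀ h, w h ∈ Subgroup.center H := fun h => hβZ _
  set α₀ : H →* H := MonoidHom.mk' (fun h => mA θ h * (w h)⁻¹) (by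
    intro x y
    have hcx : ∀ g : H, g * (w x)⁻¹ = (w x)⁻¹ * g := fun g =>
      Subgroup.mem_center_iff.mp (Subgroup.inv_mem _ (hwZ x)) g
    have hcy : ∀ g : H, g * (w y)⁻¹ = (w y)⁻¹ * g := fun g =>
      Subgroup.mem_center_iff.mp (Subgroup.inv_mem _ (hwZ y)) g
    show mA θ (x * y) * (w (x * y))⁻¹ = (mA θ x * (w x)⁻¹) * (mA θ y * (w y)⁻¹)
    rw [map_mul, map_mul, mul_inv_rev]
    calc mA θ x * mA θ y * ((w y)⁻¹ * (w x)⁻¹)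
        = mA θ x * (mA θ y * (w y)⁻¹ * (w x)⁻¹) := by group
      _ = mA θ x * ((w x)⁻¹ * (mA θ y * (w y)⁻¹)) := by rw [hcx (mA θ y * (w y)⁻¹)]
      _ = (mA θ x * (w x)⁻¹) * (mA θ y * (w y)⁻¹) := by group) with hα₀def
  have hα₀app : ∀ h, α₀ h = mA θ h * (w h)⁻¹ := fun _ => rfl
  have hα₀inj : Function.Injective ⇑α₀ := by
    rw [injective_iff_map_eq_one]
    intro h hh
    have e2 : mD θ (δe.symm ((mG θ h)⁻¹)) = (mG θ h)⁻¹ := δe.apply_symm_apply _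
    have e1 : mB θ (δe.symm ((mG θ h)⁻¹)) = (w h)⁻¹ := by
      rw [map_inv δe.symm, map_inv, ← hwapp]
    have h1 : θ (h, δe.symm ((mG θ h)⁻¹)) = (α₀ h, 1) := by
      rw [apply_eq, e1, e2, mul_inv_cancel, ← hα₀app]
    have h2 : θ (h, δe.symm ((mG θ h)⁻¹)) = θ 1 := by
      rw [h1, hh, map_one]
      rfl
    have h3 := θ.injective h2
    exact congrArg Prod.fst h3
  have hα₀bij : Function.Bijective ⇑α₀ := Finite.injective_iff_bijective.mp hα₀inj
  set α₀e : H ≃* H := MulEquiv.ofBijective α₀ hα₀bij with hα₀edef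
  set β₀ : K →* H := α₀e.symm.toMonoidHom.comp ((mB θ).comp δe.symm.toMonoidHom) with hβ₀def
  have hβ₀app : ∀ k, β₀ k = α₀e.symm (mB θ (δe.symm k)) := fun _ => rfl
  have hβ₀Z : ∀ k, β₀ k ∈ Subgroup.center H := by
    intro k
    rw [Subgroup.mem_center_iff]
    intro g
    apply α₀e.injective
    rw [map_mul, map_mul, hβ₀app, α₀e.apply_symm_apply]
    exact Subgroup.mem_center_iff.mp (hβZ (δe.symm k)) (α₀e g)
  -- assemble
  refine ⟨MulEquiv.prodCongr α₀e (MulEquiv.refl K), ⟨α₀e, fun x => rfl⟩,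
    centralAutB β₀ hβ₀Z, ⟨β₀, hβ₀Z, fun x => rfl⟩,
    centralAutC (mG θ) hγZ, ⟨mG θ, hγZ, fun x => rfl⟩,
    MulEquiv.prodCongr (MulEquiv.refl H) δe, ⟨δe, fun x => rfl⟩, ?_⟩
  apply MulEquiv.ext
  rintro ⟨h, k⟩
  rw [MulAut.mul_apply, MulAut.mul_apply, MulAut.mul_apply]
  have hd : (MulEquiv.prodCongr (MulEquiv.refl H) δe) ((h : H), (k : K)) = (h, δe k) := rfl
  have hc : (centralAutC (mG θ) hγZ) ((h : H), δe k) = (h, δe k * mG θ h) := rfl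
  have hb : (centralAutB β₀ hβ₀Z) ((h : H), δe k * mG θ h)
      = (h * β₀ (δe k * mG θ h), δe k * mG θ h) := rfl
  have ha : (MulEquiv.prodCongr α₀e (MulEquiv.refl K))
        ((h * β₀ (δe k * mG θ h) : H), δe k * mG θ h)
      = (α₀e (h * β₀ (δe k * mG θ h)), δe k * mG θ h) := rfl
  rw [hd, hc, hb, ha, apply_eq]
  have e0 : δe.symm (δe k * mG θ h) = k * δe.symm (mG θ h) := by
    rw [map_mul, δe.symm_apply_apply]
  have e1 : α₀e (β₀ (δe k * mG θ h)) = mB θ k * w h := by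
    have h5 : α₀e (β₀ (δe k * mG θ h)) = mB θ (δe.symm (δe k * mG θ h)) := by
      rw [hβ₀app, α₀e.apply_symm_apply]
    rw [h5, e0, map_mul, ← hwapp]
  refine Prod.ext ?_ ?_
  · show mA θ h * mB θ k = α₀e (h * β₀ (δe k * mG θ h))
    rw [map_mul, e1]
    have h6 : α₀e h = mA θ h * (w h)⁻¹ := hα₀app h
    rw [h6]
    have hcw : mB θ k * w h = w h * mB θ k := Subgroup.mem_center_iff.mp (hwZ h) (mB θ k)
    rw [hcw]
    group
  · show mG θ h * mD θ k = δe k * mG θ h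
    have hcg := Subgroup.mem_center_iff.mp (hγZ h) (mD θ k)
    rw [hδeapp]
    exact hcg.symm

end BCMaux


namespace BCMaux

variable {H K : Type} [Group H] [Group K]

lemma ad_inv_apply {a d : MulAut (H × K)} {αe : MulAut H} {δe : MulAut K}
    (ha : ∀ x : H × K, a x = (αe x.1, x.2)) (hd : ∀ x : H × K, d x = (x.1, δe x.2))
    (x : H × K) : (a * d)⁻¹ x = (αe⁻¹ x.1, δe⁻¹ x.2) := by
  have h1 : (a * d) (αe⁻¹ x.1, δe⁻¹ x.2) = x := by
    rw [MulAut.mul_apply, hd, ha]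
    show (αe (αe⁻¹ x.1), δe (δe⁻¹ x.2)) = x
    rw [MulAut.apply_inv_self, MulAut.apply_inv_self]
  calc (a * d)⁻¹ x = (a * d)⁻¹ ((a * d) (αe⁻¹ x.1, δe⁻¹ x.2)) := by rw [h1]
    _ = (αe⁻¹ x.1, δe⁻¹ x.2) := MulAut.inv_apply_self _ _ _

lemma conjB (a : MulAut (H × K)) (haA : a ∈ autSetA H K) (d : MulAut (H × K))
    (hdD : d ∈ autSetD H K) (b : MulAut (H × K)) (hbB : b ∈ autSetB H K) :
    (a * d) * b * (a * d)⁻¹ ∈ autSetB H K := by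
  obtain ⟨αe, ha⟩ := haA
  obtain ⟨δe, hd⟩ := hdD
  obtain ⟨β, hβZ, hb⟩ := hbB
  refine ⟨αe.toMonoidHom.comp (β.comp (δe⁻¹ : MulAut K).toMonoidHom),
    fun k => center_map αe (hβZ _), fun x => ?_⟩
  have h1 : ((a * d) * b * (a * d)⁻¹) x = (a * d) (b ((a * d)⁻¹ x)) := by
    rw [MulAut.mul_apply, MulAut.mul_apply]
  rw [h1, ad_inv_apply ha hd, hb]
  show (a * d) ((αe⁻¹ x.1 * β (δe⁻¹ x.2), δe⁻¹ x.2)) = _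
  rw [MulAut.mul_apply, hd, ha]
  show (αe (αe⁻¹ x.1 * β (δe⁻¹ x.2)), δe (δe⁻¹ x.2)) = _
  rw [map_mul, MulAut.apply_inv_self, MulAut.apply_inv_self]
  rfl

lemma conjC (a : MulAut (H × K)) (haA : a ∈ autSetA H K) (d : MulAut (H × K))
    (hdD : d ∈ autSetD H K) (c : MulAut (H × K)) (hcC : c ∈ autSetC H K) :
    (a * d) * c * (a * d)⁻¹ ∈ autSetC H K := by
  obtain ⟨αe, ha⟩ := haA
  obtain ⟨δe, hd⟩ := hdD
  obtain ⟨γ, hγZ, hc⟩ := hcC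
  refine ⟨δe.toMonoidHom.comp (γ.comp (αe⁻¹ : MulAut H).toMonoidHom),
    fun h => center_map δe (hγZ _), fun x => ?_⟩
  have h1 : ((a * d) * c * (a * d)⁻¹) x = (a * d) (c ((a * d)⁻¹ x)) := by
    rw [MulAut.mul_apply, MulAut.mul_apply]
  rw [h1, ad_inv_apply ha hd, hc]
  show (a * d) ((αe⁻¹ x.1, δe⁻¹ x.2 * γ (αe⁻¹ x.1))) = _
  rw [MulAut.mul_apply, hd, ha]
  show (αe (αe⁻¹ x.1), δe (δe⁻¹ x.2 * γ (αe⁻¹ x.1))) = _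
  rw [map_mul, MulAut.apply_inv_self, MulAut.apply_inv_self]
  rfl

end BCMaux



theorem stmt_3 (H K : Type) [Group H] [Group K] [Finite H] [Finite K]
    (hnc : IsEmpty (CommonDirectFactor H K)) :
    (∃ SA : Subgroup (MulAut (H × K)), (SA : Set (MulAut (H × K))) = autSetA H K) ∧
    (∃ SB : Subgroup (MulAut (H × K)), (SB : Set (MulAut (H × K))) = autSetB H K) ∧
    (∃ SC : Subgroup (MulAut (H × K)), (SC : Set (MulAut (H × K))) = autSetC H K) ∧
    (∃ SD : Subgroup (MulAut (H × K)), (SD : Set (MulAut (H × K))) = autSetD H K) ∧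
    (∀ θ : MulAut (H × K), ∃ a ∈ autSetA H K, ∃ b ∈ autSetB H K,
      ∃ c ∈ autSetC H K, ∃ d ∈ autSetD H K, θ = a * b * c * d) ∧
    (∀ a ∈ autSetA H K, ∀ d ∈ autSetD H K, ∀ b ∈ autSetB H K,
      (a * d) * b * (a * d)⁻¹ ∈ autSetB H K) ∧
    (∀ a ∈ autSetA H K, ∀ d ∈ autSetD H K, ∀ c ∈ autSetC H K,
      (a * d) * c * (a * d)⁻¹ ∈ autSetC H K) :=
  ⟨⟨BCMaux.subA H K, rfl⟩, ⟨BCMaux.subB H K, rfl⟩, ⟨BCMaux.subC H K, rfl⟩,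
    ⟨BCMaux.subD H K, rfl⟩,
    fun θ => BCMaux.decomposition H K hnc θ,
    fun a haA d hdD b hbB => BCMaux.conjB a haA d hdD b hbB,
    fun a haA d hdD c hcC => BCMaux.conjC a haA d hdD c hcC⟩
end

section
/- Let p, q be distinct primes with q^2 dividing p−1, let r have multiplicative order q^2 modulo p^2, and let G = ⟨a, b | a^{q^2} = b^{p^2} = 1, a⁻¹ba = b^r⟩. Then Aut(G) is isomorphic to Z_{p^2} ⋊ Z_{p(p-1)} (the holomorph of Z_{p^2}). -/
open Multiplicative SemidirectProduct
set_option linter.unusedSectionVars false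

namespace Stmt14Aux

lemma hom_ofAdd {n : ℕ} [NeZero n] {M : Type*} [Monoid M]
    (f : Multiplicative (ZMod n) →* M) (x : ZMod n) :
    f (ofAdd x) = f (ofAdd 1) ^ x.val := by
  rw [← map_pow]
  congr 1
  rw [← ofAdd_nsmul]
  simp [nsmul_eq_mul, ZMod.natCast_val, ZMod.cast_id]

lemma hom_ofAdd' {n : ℕ} [NeZero n]
    (f : Multiplicative (ZMod n) →* Multiplicative (ZMod n)) (x : ZMod n) :
    f (ofAdd x) = ofAdd (x * toAdd (f (ofAdd 1))) := by
  rw [hom_ofAdd, ← ofAdd_toAdd (f (ofAdd 1)), ← ofAdd_nsmul]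
  congr 1
  simp [nsmul_eq_mul, ZMod.natCast_val, ZMod.cast_id, mul_comm]

lemma mulAut_apply {n : ℕ} [NeZero n] (α : MulAut (Multiplicative (ZMod n)))
    (x : Multiplicative (ZMod n)) :
    α x = ofAdd (toAdd x * toAdd (α (ofAdd 1))) := by
  conv_lhs => rw [← ofAdd_toAdd x]
  simpa using hom_ofAdd' α.toMonoidHom (toAdd x)

lemma one_add_pow {A : Type*} [CommRing A] (x : A) (hx : x ^ 2 = 0) (n : ℕ) :
    (1 + x) ^ n = 1 + n * x := by
  induction n with
  | zero => simp
  | succ n ih =>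
    rw [pow_succ, ih]
    have h : x * x = 0 := by rw [← sq]; exact hx
    push_cast
    calc (1 + (n:A) * x) * (1 + x) = 1 + ((n:A)+1) * x + (n:A) * (x * x) := by ring
    _ = 1 + ((n:A)+1) * x := by rw [h]; ring

section Main

variable (p q r : ℕ) [NeZero (p ^ 2)] [NeZero (q ^ 2)]
variable (φ : Multiplicative (ZMod (q ^ 2)) →* MulAut (Multiplicative (ZMod (p ^ 2))))

/-- cocycle exponent -/
def S (u : ZMod (p ^ 2)) (k : ZMod (q ^ 2)) : ZMod (p ^ 2) :=
  ((r : ZMod (p ^ 2)) ^ k.val - 1) * u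

lemma R_add (hone : (r : ZMod (p ^ 2)) ^ q ^ 2 = 1) (a b : ZMod (q ^ 2)) :
    (r : ZMod (p ^ 2)) ^ (a + b).val = (r : ZMod (p ^ 2)) ^ a.val * (r : ZMod (p ^ 2)) ^ b.val := by
  rw [← pow_add, ZMod.val_add]
  conv_rhs => rw [← Nat.div_add_mod (a.val + b.val) (q ^ 2)]
  rw [pow_add, pow_mul, hone, one_pow, one_mul]

lemma S_add (u : ZMod (p ^ 2)) (hone : (r : ZMod (p ^ 2)) ^ q ^ 2 = 1) (a b : ZMod (q ^ 2)) :
    S p q r u (a + b) = S p q r u a + (r : ZMod (p ^ 2)) ^ a.val * S p q r u b := by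
  unfold S
  rw [R_add p q r hone]
  ring

variable {φ}

/-- the endomorphism of G determined by (m, c) -/
def theta
    (hφ' : ∀ (h : Multiplicative (ZMod (q ^ 2))) (x : ZMod (p ^ 2)),
      φ h (ofAdd x) = ofAdd ((r : ZMod (p ^ 2)) ^ (toAdd h).val * x))
    (u : ZMod (p ^ 2)) (hone : (r : ZMod (p ^ 2)) ^ q ^ 2 = 1)
    (m c : ZMod (p ^ 2)) :
    (Multiplicative (ZMod (p ^ 2)) ⋊[φ] Multiplicative (ZMod (q ^ 2))) →*
      (Multiplicative (ZMod (p ^ 2)) ⋊[φ] Multiplicative (ZMod (q ^ 2))) where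
  toFun g := ⟨ofAdd (toAdd g.left * c + m * S p q r u (toAdd g.right)), g.right⟩
  map_one' := by
    refine SemidirectProduct.ext ?_ rfl
    show ofAdd (toAdd (1 : Multiplicative (ZMod (p ^ 2))) * c
      + m * S p q r u (toAdd (1 : Multiplicative (ZMod (q ^ 2))))) = 1
    have h0 : S p q r u (toAdd (1 : Multiplicative (ZMod (q ^ 2)))) = 0 := by
      unfold S
      simp [ZMod.val_zero]
    rw [h0]
    simp
  map_mul' a b := by
    refine SemidirectProduct.ext ?_ rfl
    show ofAdd (toAdd (a * b).left * c + m * S p q r u (toAdd (a * b).right)) = _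
    rw [mul_left, mul_right]
    conv_lhs => rw [← ofAdd_toAdd b.left]
    rw [hφ' a.right (toAdd b.left)]
    show ofAdd _ = ofAdd (toAdd a.left * c + m * S p q r u (toAdd a.right))
      * (φ a.right) (ofAdd (toAdd b.left * c + m * S p q r u (toAdd b.right)))
    rw [hφ' a.right]
    rw [← ofAdd_add]
    simp only [toAdd_mul, toAdd_ofAdd]
    congr 1
    rw [S_add p q r u hone]
    ring

lemma theta_comp
    (hφ' : ∀ (h : Multiplicative (ZMod (q ^ 2))) (x : ZMod (p ^ 2)),
      φ h (ofAdd x) = ofAdd ((r : ZMod (p ^ 2)) ^ (toAdd h).val * x))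
    (u : ZMod (p ^ 2)) (hone : (r : ZMod (p ^ 2)) ^ q ^ 2 = 1)
    (m₁ c₁ m₂ c₂ : ZMod (p ^ 2)) :
    (theta p q r hφ' u hone m₁ c₁).comp (theta p q r hφ' u hone m₂ c₂)
      = theta p q r hφ' u hone (m₁ + m₂ * c₁) (c₂ * c₁) := by
  refine MonoidHom.ext fun g => ?_
  refine SemidirectProduct.ext ?_ rfl
  show ofAdd ((toAdd g.left * c₂ + m₂ * S p q r u (toAdd g.right)) * c₁
      + m₁ * S p q r u (toAdd g.right))
    = ofAdd (toAdd g.left * (c₂ * c₁) + (m₁ + m₂ * c₁) * S p q r u (toAdd g.right))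
  congr 1
  ring

/-- the homomorphism from the holomorph to the endomorphism monoid -/
def Psi0
    (hφ' : ∀ (h : Multiplicative (ZMod (q ^ 2))) (x : ZMod (p ^ 2)),
      φ h (ofAdd x) = ofAdd ((r : ZMod (p ^ 2)) ^ (toAdd h).val * x))
    (u : ZMod (p ^ 2)) (hone : (r : ZMod (p ^ 2)) ^ q ^ 2 = 1) :
    (Multiplicative (ZMod (p ^ 2))
        ⋊[MonoidHom.id (MulAut (Multiplicative (ZMod (p ^ 2))))]
        MulAut (Multiplicative (ZMod (p ^ 2)))) →*
      Monoid.End (Multiplicative (ZMod (p ^ 2)) ⋊[φ] Multiplicative (ZMod (q ^ 2))) where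
  toFun d := (theta p q r hφ' u hone (toAdd d.left) (toAdd (d.right (ofAdd 1))) :
      _ →* _)
  map_one' := by
    refine MonoidHom.ext fun g => ?_
    show (⟨ofAdd (toAdd g.left * toAdd ((1 : MulAut (Multiplicative (ZMod (p ^ 2)))) (ofAdd 1))
        + toAdd (1 : Multiplicative (ZMod (p ^ 2))) * S p q r u (toAdd g.right)), g.right⟩ :
      Multiplicative (ZMod (p ^ 2)) ⋊[φ] Multiplicative (ZMod (q ^ 2))) = g
    refine SemidirectProduct.ext ?_ rfl
    show ofAdd (toAdd g.left * toAdd ((1 : MulAut (Multiplicative (ZMod (p ^ 2)))) (ofAdd 1))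
        + toAdd (1 : Multiplicative (ZMod (p ^ 2))) * S p q r u (toAdd g.right)) = g.left
    simp
  map_mul' d e := by
    have h1 : toAdd (d * e).left
        = toAdd d.left + toAdd e.left * toAdd (d.right (ofAdd 1)) := by
      rw [mul_left]
      show toAdd (d.left * d.right e.left) = _
      rw [toAdd_mul, mulAut_apply d.right e.left, toAdd_ofAdd]
    have h2 : toAdd ((d * e).right (ofAdd 1))
        = toAdd (e.right (ofAdd 1)) * toAdd (d.right (ofAdd 1)) := by
      rw [mul_right]
      show toAdd (d.right (e.right (ofAdd 1))) = _
      rw [mulAut_apply d.right (e.right (ofAdd 1)), toAdd_ofAdd]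
    show theta p q r hφ' u hone _ _
      = (theta p q r hφ' u hone (toAdd d.left) (toAdd (d.right (ofAdd 1)))).comp
        (theta p q r hφ' u hone (toAdd e.left) (toAdd (e.right (ofAdd 1))))
    rw [h1, h2, theta_comp]

/-- the isomorphism candidate -/
def Psi
    (hφ' : ∀ (h : Multiplicative (ZMod (q ^ 2))) (x : ZMod (p ^ 2)),
      φ h (ofAdd x) = ofAdd ((r : ZMod (p ^ 2)) ^ (toAdd h).val * x))
    (u : ZMod (p ^ 2)) (hone : (r : ZMod (p ^ 2)) ^ q ^ 2 = 1) :
    (Multiplicative (ZMod (p ^ 2))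
        ⋊[MonoidHom.id (MulAut (Multiplicative (ZMod (p ^ 2))))]
        MulAut (Multiplicative (ZMod (p ^ 2)))) →*
      MulAut (Multiplicative (ZMod (p ^ 2)) ⋊[φ] Multiplicative (ZMod (q ^ 2))) where
  toFun d :=
    { toFun := Psi0 p q r hφ' u hone d
      invFun := Psi0 p q r hφ' u hone d⁻¹
      left_inv := fun x => by
        have h : Psi0 p q r hφ' u hone d⁻¹ * Psi0 p q r hφ' u hone d = 1 := by
          rw [← map_mul, inv_mul_cancel, map_one]
        exact congrFun (congrArg (fun (f : Monoid.End _) => (f : _ → _)) h) x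
      right_inv := fun x => by
        have h : Psi0 p q r hφ' u hone d * Psi0 p q r hφ' u hone d⁻¹ = 1 := by
          rw [← map_mul, mul_inv_cancel, map_one]
        exact congrFun (congrArg (fun (f : Monoid.End _) => (f : _ → _)) h) x
      map_mul' := (Psi0 p q r hφ' u hone d).map_mul }
  map_one' := by
    refine MulEquiv.ext fun x => ?_
    show Psi0 p q r hφ' u hone 1 x = x
    rw [map_one]
    rfl
  map_mul' d e := by
    refine MulEquiv.ext fun x => ?_
    show Psi0 p q r hφ' u hone (d * e) x
      = Psi0 p q r hφ' u hone d (Psi0 p q r hφ' u hone e x)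
    rw [map_mul]
    rfl

lemma conj_inl (g : Multiplicative (ZMod (p ^ 2)) ⋊[φ] Multiplicative (ZMod (q ^ 2)))
    (n : Multiplicative (ZMod (p ^ 2))) :
    g * inl n * g⁻¹ = inl (φ g.right n) := by
  conv_lhs => rw [← inl_left_mul_inr_right g]
  rw [mul_inv_rev, ← map_inv, ← map_inv]
  rw [show inl g.left * inr g.right * inl n * (inr g.right⁻¹ * inl g.left⁻¹)
      = inl g.left * (inr g.right * inl n * inr g.right⁻¹) * inl g.left⁻¹ by group]
  rw [← inl_aut, ← map_mul, ← map_mul]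
  congr 1
  rw [mul_comm g.left, mul_assoc, mul_inv_cancel, mul_one]

lemma hom_eq_of_gen {M : Type*} [Monoid M]
    (f g : (Multiplicative (ZMod (p ^ 2)) ⋊[φ] Multiplicative (ZMod (q ^ 2))) →* M)
    (h1 : f (inl (ofAdd 1)) = g (inl (ofAdd 1)))
    (h2 : f (inr (ofAdd 1)) = g (inr (ofAdd 1)))
    (x : Multiplicative (ZMod (p ^ 2)) ⋊[φ] Multiplicative (ZMod (q ^ 2))) : f x = g x := by
  rw [← inl_left_mul_inr_right x, map_mul, map_mul]
  congr 1
  · have hf := hom_ofAdd (f.comp inl) (toAdd x.left)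
    have hg := hom_ofAdd (g.comp inl) (toAdd x.left)
    simp only [MonoidHom.comp_apply] at hf hg
    rw [← ofAdd_toAdd x.left, hf, hg, h1]
  · have hf := hom_ofAdd (f.comp inr) (toAdd x.right)
    have hg := hom_ofAdd (g.comp inr) (toAdd x.right)
    simp only [MonoidHom.comp_apply] at hf hg
    rw [← ofAdd_toAdd x.right, hf, hg, h2]

lemma runit (hp : p.Prime) (hq : q.Prime) (hpq : p ≠ q)
    (hr : orderOf ((r : ZMod (p ^ 2))) = q ^ 2) :
    IsUnit ((r : ZMod (p ^ 2)) - 1) := by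
  set x : ZMod (p ^ 2) := (r : ZMod (p ^ 2)) - 1 with hx
  have hnd : ¬ (p ∣ x.val) := by
    intro hd
    obtain ⟨t, ht⟩ := hd
    have hx2 : x = (p : ZMod (p ^ 2)) * (t : ZMod (p ^ 2)) := by
      calc x = ((x.val : ℕ) : ZMod (p ^ 2)) := by rw [ZMod.natCast_val, ZMod.cast_id]
      _ = (((p * t : ℕ)) : ZMod (p ^ 2)) := by rw [← ht]
      _ = (p : ZMod (p ^ 2)) * (t : ZMod (p ^ 2)) := by push_cast; ring
    have h0 : ((p : ZMod (p ^ 2))) ^ 2 = 0 := by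
      have h0 : ((p ^ 2 : ℕ) : ZMod (p ^ 2)) = 0 := ZMod.natCast_self _
      push_cast at h0
      exact h0
    have hsq : ((p : ZMod (p ^ 2)) * (t : ZMod (p ^ 2))) ^ 2 = 0 := by
      calc ((p : ZMod (p ^ 2)) * (t : ZMod (p ^ 2))) ^ 2
          = (p : ZMod (p ^ 2)) ^ 2 * (t : ZMod (p ^ 2)) ^ 2 := by ring
      _ = 0 := by rw [h0, zero_mul]
    have hrp : (r : ZMod (p ^ 2)) ^ p = 1 := by
      have he : (r : ZMod (p ^ 2)) = 1 + (p : ZMod (p ^ 2)) * (t : ZMod (p ^ 2)) := by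
        rw [← hx2, hx]; ring
      rw [he, one_add_pow _ hsq]
      calc (1 : ZMod (p ^ 2)) + (p : ℕ) * ((p : ZMod (p ^ 2)) * (t : ZMod (p ^ 2)))
          = 1 + (p : ZMod (p ^ 2)) ^ 2 * (t : ZMod (p ^ 2)) := by push_cast; ring
      _ = 1 := by rw [h0]; ring
    have hdv : q ^ 2 ∣ p := hr ▸ orderOf_dvd_of_pow_eq_one hrp
    have hqp : q ∣ p := dvd_trans (dvd_pow_self q two_ne_zero) hdv
    exact hpq ((Nat.prime_dvd_prime_iff_eq hq hp).mp hqp).symm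
  have h : IsUnit ((x.val : ℕ) : ZMod (p ^ 2)) := by
    rw [ZMod.isUnit_iff_coprime, Nat.coprime_pow_right_iff (by norm_num)]
    exact Nat.coprime_comm.mp (hp.coprime_iff_not_dvd.mpr hnd)
  rwa [ZMod.natCast_val, ZMod.cast_id] at h

lemma Psi0_apply
    (hφ' : ∀ (h : Multiplicative (ZMod (q ^ 2))) (x : ZMod (p ^ 2)),
      φ h (ofAdd x) = ofAdd ((r : ZMod (p ^ 2)) ^ (toAdd h).val * x))
    (u : ZMod (p ^ 2)) (hone : (r : ZMod (p ^ 2)) ^ q ^ 2 = 1)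
    (d : Multiplicative (ZMod (p ^ 2))
        ⋊[MonoidHom.id (MulAut (Multiplicative (ZMod (p ^ 2))))]
        MulAut (Multiplicative (ZMod (p ^ 2))))
    (g : Multiplicative (ZMod (p ^ 2)) ⋊[φ] Multiplicative (ZMod (q ^ 2))) :
    Psi0 p q r hφ' u hone d g
      = ⟨ofAdd (toAdd g.left * toAdd (d.right (ofAdd 1))
          + toAdd d.left * S p q r u (toAdd g.right)), g.right⟩ := rfl

end Main

/-- turn a unit into a multiplicative automorphism -/
def mulAutOfUnit {n : ℕ} (c : (ZMod n)ˣ) : MulAut (Multiplicative (ZMod n)) where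
  toFun x := ofAdd (toAdd x * (c : ZMod n))
  invFun x := ofAdd (toAdd x * ((c⁻¹ : (ZMod n)ˣ) : ZMod n))
  left_inv x := by
    simp only [toAdd_ofAdd, mul_assoc]
    rw [Units.mul_inv, mul_one, ofAdd_toAdd]
  right_inv x := by
    simp only [toAdd_ofAdd, mul_assoc]
    rw [Units.inv_mul, mul_one, ofAdd_toAdd]
  map_mul' x y := by
    simp only [toAdd_mul, add_mul, ofAdd_add]


@[simp] lemma mulAutOfUnit_apply {n : ℕ} (c : (ZMod n)ˣ) (x : Multiplicative (ZMod n)) :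
    mulAutOfUnit c x = ofAdd (toAdd x * (c : ZMod n)) := rfl

end Stmt14Aux

open Stmt14Aux Multiplicative SemidirectProduct in
theorem stmt_14 (p q : ℕ) (hp : p.Prime) (hq : q.Prime) (hpq : p ≠ q)
    (hdvd : q ^ 2 ∣ p - 1) (r : ℕ)
    (hr : orderOf ((r : ZMod (p ^ 2))) = q ^ 2)
    (φ : Multiplicative (ZMod (q ^ 2)) →* MulAut (Multiplicative (ZMod (p ^ 2))))
    (hφ : φ (Multiplicative.ofAdd 1) (Multiplicative.ofAdd 1) =
      Multiplicative.ofAdd 1 ^ r) :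
    Nonempty
      (MulAut (Multiplicative (ZMod (p ^ 2)) ⋊[φ] Multiplicative (ZMod (q ^ 2))) ≃*
        Multiplicative (ZMod (p ^ 2))
          ⋊[MonoidHom.id (MulAut (Multiplicative (ZMod (p ^ 2))))]
          MulAut (Multiplicative (ZMod (p ^ 2)))) := by
  haveI hf1 : Fact p.Prime := ⟨hp⟩
  haveI hf2 : Fact q.Prime := ⟨hq⟩
  haveI : NeZero (p ^ 2) := ⟨pow_ne_zero 2 hp.ne_zero⟩
  haveI : NeZero (q ^ 2) := ⟨pow_ne_zero 2 hq.ne_zero⟩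
  haveI : Fact (1 < q ^ 2) := ⟨Nat.one_lt_pow two_ne_zero hq.one_lt⟩
  have hone : (r : ZMod (p ^ 2)) ^ q ^ 2 = 1 := by rw [← hr]; exact pow_orderOf_eq_one _
  obtain ⟨cw, hcw⟩ := runit p q r hp hq hpq hr
  set u : ZMod (p ^ 2) := ((cw⁻¹ : (ZMod (p ^ 2))ˣ) : ZMod (p ^ 2)) with hudef
  have hu : ((r : ZMod (p ^ 2)) - 1) * u = 1 := by rw [← hcw, hudef]; exact cw.mul_inv
  have hφ1 : ∀ x : ZMod (p ^ 2),
      φ (ofAdd (1 : ZMod (q ^ 2))) (ofAdd x) = ofAdd ((r : ZMod (p ^ 2)) * x) := by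
    intro x
    have h0 : φ (ofAdd (1 : ZMod (q ^ 2))) (ofAdd (1 : ZMod (p ^ 2)))
        = ofAdd ((r : ZMod (p ^ 2))) := by
      rw [hφ, ← ofAdd_nsmul]
      congr 1
      simp [nsmul_eq_mul]
    have h := hom_ofAdd' (φ (ofAdd (1 : ZMod (q ^ 2)))).toMonoidHom x
    simp only [MulEquiv.coe_toMonoidHom] at h
    rw [h, h0, toAdd_ofAdd, mul_comm]
  have hφ' : ∀ (h : Multiplicative (ZMod (q ^ 2))) (x : ZMod (p ^ 2)),
      φ h (ofAdd x) = ofAdd ((r : ZMod (p ^ 2)) ^ (toAdd h).val * x) := by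
    have hpow : ∀ (v : ℕ) (x : ZMod (p ^ 2)),
        (φ (ofAdd (1 : ZMod (q ^ 2))) ^ v) (ofAdd x) = ofAdd ((r : ZMod (p ^ 2)) ^ v * x) := by
      intro v
      induction v with
      | zero => intro x; simp
      | succ v ih =>
        intro x
        have hps : φ (ofAdd (1 : ZMod (q ^ 2))) ^ (v + 1)
            = φ (ofAdd (1 : ZMod (q ^ 2))) ^ v * φ (ofAdd (1 : ZMod (q ^ 2))) := pow_succ _ _
        rw [hps, MulAut.mul_apply, hφ1, ih]
        congr 1
        ring
    intro h x
    conv_lhs => rw [← ofAdd_toAdd h, hom_ofAdd φ (toAdd h)]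
    exact hpow _ x
  have hS0 : S p q r u 0 = 0 := by
    show ((r : ZMod (p ^ 2)) ^ (0 : ZMod (q ^ 2)).val - 1) * u = 0
    rw [ZMod.val_zero, pow_zero, sub_self, zero_mul]
  have hS1 : S p q r u 1 = 1 := by
    show ((r : ZMod (p ^ 2)) ^ (1 : ZMod (q ^ 2)).val - 1) * u = 1
    rw [ZMod.val_one, pow_one]
    exact hu
  have hinj : Function.Injective (Psi p q r hφ' u hone) := by
    refine (injective_iff_map_eq_one _).mpr ?_
    intro d hd
    have happ : ∀ x, Psi0 p q r hφ' u hone d x = x := by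
      intro x
      have h := DFunLike.congr_fun hd x
      exact h
    have h1 := happ (inr (ofAdd (1 : ZMod (q ^ 2))))
    have h2 := happ (inl (ofAdd (1 : ZMod (p ^ 2))))
    rw [Psi0_apply] at h1 h2
    have e1 : toAdd d.left = 0 := by
      have h3 := congrArg SemidirectProduct.left h1
      simp only [left_inr, right_inr, toAdd_one, toAdd_ofAdd, zero_mul, zero_add] at h3
      rw [hS1, mul_one, ofAdd_eq_one] at h3
      exact h3
    have e2 : toAdd (d.right (ofAdd 1)) = 1 := by
      have h3 := congrArg SemidirectProduct.left h2
      simp only [left_inl, right_inl, toAdd_one, toAdd_ofAdd] at h3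
      rw [hS0, mul_zero, add_zero, one_mul] at h3
      exact Multiplicative.ofAdd.injective h3
    refine SemidirectProduct.ext ?_ ?_
    · show d.left = 1
      rw [← ofAdd_toAdd d.left, e1, ofAdd_zero]
    · show d.right = 1
      refine MulEquiv.ext fun x => ?_
      rw [mulAut_apply d.right x, e2, mul_one, ofAdd_toAdd]
      rfl
  have hsurj : Function.Surjective (Psi p q r hφ' u hone) := by
    intro θ0
    have hPunit : IsUnit (((p ^ 2 : ℕ)) : ZMod (q ^ 2)) := by
      rw [ZMod.isUnit_iff_coprime]
      exact Nat.Coprime.pow 2 2 ((Nat.coprime_primes hp hq).mpr hpq)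
    have hNchar : ∀ n : Multiplicative (ZMod (p ^ 2)), (θ0 (inl n)).right = 1 := by
      intro n
      have hn : n ^ (p ^ 2) = 1 := by
        rw [← ofAdd_toAdd n, ← ofAdd_nsmul, ofAdd_eq_one, nsmul_eq_mul]
        rw [show (((p ^ 2 : ℕ)) : ZMod (p ^ 2)) = 0 from ZMod.natCast_self _, zero_mul]
      have h1 : θ0 (inl n) ^ (p ^ 2) = 1 := by
        rw [← map_pow, ← map_pow, hn, map_one, map_one]
      have h3 : ((θ0 (inl n)).right) ^ (p ^ 2) = 1 := by
        have h4 := congrArg rightHom h1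
        rwa [map_pow, map_one] at h4
      rw [← ofAdd_toAdd ((θ0 (inl n)).right), ← ofAdd_nsmul, ofAdd_eq_one, nsmul_eq_mul] at h3
      have h4 : toAdd ((θ0 (inl n)).right) = 0 := (hPunit.mul_right_eq_zero).mp h3
      rw [← ofAdd_toAdd ((θ0 (inl n)).right), h4, ofAdd_zero]
    have hIn : ∀ n, θ0 (inl n) = inl ((θ0 (inl n)).left) :=
      fun n => SemidirectProduct.ext rfl (hNchar n)
    obtain ⟨c, hA⟩ : ∃ c : ZMod (p ^ 2), ∀ x : ZMod (p ^ 2),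
        (θ0 (inl (ofAdd x))).left = ofAdd (x * c) := by
      let A : Multiplicative (ZMod (p ^ 2)) →* Multiplicative (ZMod (p ^ 2)) :=
        { toFun := fun n => (θ0 (inl n)).left
          map_one' := by
            show (θ0 (inl 1)).left = 1
            rw [map_one, map_one, one_left]
          map_mul' := fun a b => by
            show (θ0 (inl (a * b))).left = (θ0 (inl a)).left * (θ0 (inl b)).left
            rw [map_mul, map_mul, mul_left, hNchar a, map_one]
            rfl }
      exact ⟨toAdd (A (ofAdd 1)), fun x => hom_ofAdd' A x⟩
    have hcunit : IsUnit c := by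
      have hinj2 : Function.Injective (fun x : ZMod (p ^ 2) => x * c) := by
        intro a b hab
        have hab' : θ0 (inl (ofAdd a)) = θ0 (inl (ofAdd b)) := by
          rw [hIn (ofAdd a), hIn (ofAdd b), hA a, hA b]
          exact congrArg (fun z => inl (ofAdd z)) hab
        exact Multiplicative.ofAdd.injective (inl_injective (θ0.injective hab'))
      obtain ⟨d0, hd0⟩ := Finite.injective_iff_surjective.mp hinj2 1
      exact IsUnit.of_mul_eq_one (a := c) d0 (by rw [mul_comm]; exact hd0)
    obtain ⟨cu, hcu⟩ := hcunit
    set w := θ0 (inr (ofAdd (1 : ZMod (q ^ 2)))) with hwdef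
    have hrel : ∀ x : ZMod (p ^ 2),
        (θ0 (inl (φ (ofAdd 1) (ofAdd x)))).left = φ w.right ((θ0 (inl (ofAdd x))).left) := by
      intro x
      have h1 : θ0 (inl (φ (ofAdd 1) (ofAdd x))) = w * θ0 (inl (ofAdd x)) * w⁻¹ := by
        rw [inl_aut, map_mul, map_mul, map_inv, map_inv, ← hwdef]
      rw [hIn (φ (ofAdd 1) (ofAdd x)), hIn (ofAdd x)] at h1
      rw [conj_inl p q] at h1
      exact inl_injective h1
    have hk : w.right = ofAdd (1 : ZMod (q ^ 2)) := by
      have h2 := hrel ((cu⁻¹ : (ZMod (p ^ 2))ˣ) : ZMod (p ^ 2))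
      rw [hφ1] at h2
      simp only [hA] at h2
      rw [← ofAdd_toAdd w.right, hφ'] at h2
      simp only [toAdd_ofAdd] at h2
      have hcc : ((cu⁻¹ : (ZMod (p ^ 2))ˣ) : ZMod (p ^ 2)) * c = 1 := by
        rw [← hcu]; exact cu.inv_mul
      have h3 := Multiplicative.ofAdd.injective h2
      rw [mul_assoc, hcc] at h3
      rw [mul_one, mul_one] at h3
      have hru : IsUnit (r : ZMod (p ^ 2)) := by
        refine IsUnit.of_mul_eq_one (a := (r : ZMod (p ^ 2))) ((r : ZMod (p ^ 2)) ^ (q ^ 2 - 1)) ?_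
        rw [← pow_succ']
        rw [show q ^ 2 - 1 + 1 = q ^ 2 from Nat.succ_pred_eq_of_pos (Nat.pow_pos (n := 2) hq.pos)]
        exact hone
      obtain ⟨ru, hru'⟩ := hru
      have h4 : ru ^ 1 = ru ^ (toAdd w.right).val := by
        apply Units.ext
        rw [Units.val_pow_eq_pow_val, Units.val_pow_eq_pow_val, hru', pow_one]
        exact h3
      have h5 := pow_eq_pow_iff_modEq.mp h4
      rw [← orderOf_units, hru', hr] at h5
      have h6 : ((toAdd w.right).val : ZMod (q ^ 2)) = ((1 : ℕ) : ZMod (q ^ 2)) :=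
        (ZMod.natCast_eq_natCast_iff _ _ _).mpr h5.symm
      rw [ZMod.natCast_val, ZMod.cast_id, Nat.cast_one] at h6
      rw [← ofAdd_toAdd w.right, h6]
    refine ⟨⟨ofAdd (toAdd w.left), mulAutOfUnit cu⟩, ?_⟩
    have e1 : Psi0 p q r hφ' u hone ⟨ofAdd (toAdd w.left), mulAutOfUnit cu⟩
        (inl (ofAdd (1 : ZMod (p ^ 2)))) = θ0 (inl (ofAdd (1 : ZMod (p ^ 2)))) := by
      rw [Psi0_apply, hIn (ofAdd 1), hA 1]
      refine SemidirectProduct.ext ?_ ?_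
      · simp only [left_inl, right_inl, toAdd_one, toAdd_ofAdd, mulAutOfUnit_apply, hcu,
          hS0, mul_zero, add_zero, one_mul]
      · simp only [right_inl]
    have e2 : Psi0 p q r hφ' u hone ⟨ofAdd (toAdd w.left), mulAutOfUnit cu⟩
        (inr (ofAdd (1 : ZMod (q ^ 2)))) = θ0 (inr (ofAdd (1 : ZMod (q ^ 2)))) := by
      rw [Psi0_apply, ← hwdef]
      refine SemidirectProduct.ext ?_ ?_
      · simp only [left_inr, right_inr, toAdd_one, toAdd_ofAdd, zero_mul, zero_add]
        rw [hS1, mul_one, ofAdd_toAdd]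
      · simp only [right_inr]
        exact hk.symm
    refine MulEquiv.ext fun x => ?_
    exact hom_eq_of_gen p q
      (Psi p q r hφ' u hone ⟨ofAdd (toAdd w.left), mulAutOfUnit cu⟩).toMonoidHom
      θ0.toMonoidHom e1 e2 x
  exact ⟨(MulEquiv.ofBijective (Psi p q r hφ' u hone) ⟨hinj, hsurj⟩).symm⟩
end

section
/- Let p, q be distinct primes with q^2 dividing p−1, r of multiplicative order q^2 modulo p, and let G = (Z_p × Z_p) ⋊ Z_{q^2} where the generator acts by the scalar r on both coordinates. Then Aut(G) is isomorphic to (Z_p × Z_p) ⋊ GL(2,p), where GL(2,p) acts naturally on Z_p × Z_p. -/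
open Finset SemidirectProduct Multiplicative

set_option linter.unusedSectionVars false
namespace Stmt17

/-- Geometric sum `1 + r + ... + r^(n-1)` as a natural number. -/
def sN (r n : ℕ) : ℕ := ∑ i ∈ range n, r ^ i

/-- Geometric sum in `ZMod p`. -/
def sZ (p r : ℕ) (n : ℕ) : ZMod p := ((sN r n : ℕ) : ZMod p)

lemma sZ_cast (p r n : ℕ) : sZ p r n = ∑ i ∈ range n, (r : ZMod p) ^ i := by
  simp [sZ, sN]

lemma sZ_add (p r m n : ℕ) :
    sZ p r (m + n) = sZ p r m + (r : ZMod p) ^ m * sZ p r n := by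
  rw [sZ_cast, sZ_cast, sZ_cast, Finset.sum_range_add, Finset.mul_sum]
  congr 1
  exact Finset.sum_congr rfl fun i _ => (pow_add _ _ _)

lemma sZ_zero (p r : ℕ) : sZ p r 0 = 0 := by simp [sZ, sN]

lemma sZ_one (p r : ℕ) : sZ p r 1 = 1 := by simp [sZ, sN]

variable {p Q : ℕ} [Fact p.Prime] {r : ℕ}

lemma sZ_mod (hQ : 1 < Q) (hr : orderOf (r : ZMod p) = Q) {m n : ℕ}
    (h : m ≡ n [MOD Q]) : sZ p r m = sZ p r n := by
  have hru : (r : ZMod p) ≠ 1 := by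
    intro h1
    rw [h1, orderOf_one] at hr
    omega
  have hsub : (r : ZMod p) - 1 ≠ 0 := sub_ne_zero.mpr hru
  have key : ∀ k, sZ p r k * ((r : ZMod p) - 1) = (r : ZMod p) ^ k - 1 := fun k => by
    rw [sZ_cast]; exact geom_sum_mul _ _
  have hpow : (r : ZMod p) ^ m = (r : ZMod p) ^ n := by
    rw [← pow_mod_orderOf, hr, h, ← hr, pow_mod_orderOf]
  have := (key m).trans (by rw [hpow, ← key n])
  exact mul_right_cancel₀ hsub this


section Psi

variable (p : ℕ)

/-- The natural action of `GL 2 (ZMod p)` on `(ZMod p)²`, as a `MulAut` of the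
multiplicative version. -/
def psiAux (g : GL (Fin 2) (ZMod p)) :
    MulAut (Multiplicative (Fin 2 → ZMod p)) where
  toFun x := ofAdd ((g : Matrix (Fin 2) (Fin 2) (ZMod p)).mulVec x.toAdd)
  invFun x := ofAdd (((g⁻¹ : GL (Fin 2) (ZMod p)) : Matrix (Fin 2) (Fin 2) (ZMod p)).mulVec x.toAdd)
  left_inv x := by
    simp only [toAdd_ofAdd, Matrix.mulVec_mulVec]
    rw [show ((g⁻¹ : GL (Fin 2) (ZMod p)) : Matrix (Fin 2) (Fin 2) (ZMod p)) *
        (g : Matrix (Fin 2) (Fin 2) (ZMod p)) = 1 from Units.inv_mul g]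
    simp
  right_inv x := by
    simp only [toAdd_ofAdd, Matrix.mulVec_mulVec]
    rw [show (g : Matrix (Fin 2) (Fin 2) (ZMod p)) *
        ((g⁻¹ : GL (Fin 2) (ZMod p)) : Matrix (Fin 2) (Fin 2) (ZMod p)) = 1 from Units.mul_inv g]
    simp
  map_mul' x y := by
    simp only [toAdd_mul, Matrix.mulVec_add]
    rfl

/-- The natural hom `GL 2 (ZMod p) →* MulAut ((ZMod p)²)`. -/
def psi : GL (Fin 2) (ZMod p) →* MulAut (Multiplicative (Fin 2 → ZMod p)) where
  toFun := psiAux p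
  map_one' := by
    ext x
    simp [psiAux, Matrix.one_mulVec]
  map_mul' g h := by
    ext x
    simp [psiAux, Matrix.mulVec_mulVec, MulAut.mul_apply]
    rename_i i
    fin_cases i <;> simp [Matrix.mul_apply, Fin.sum_univ_two] <;> ring

lemma psi_apply (g : GL (Fin 2) (ZMod p)) (v : Fin 2 → ZMod p) :
    psi p g (ofAdd v) = ofAdd ((g : Matrix (Fin 2) (Fin 2) (ZMod p)).mulVec v) := rfl

end Psi

section Phi

variable {p Q : ℕ} [NeZero Q] {r : ℕ}
  (φ : Multiplicative (ZMod Q) →* MulAut (Multiplicative (Fin 2 → ZMod p)))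
  (hφ : ∀ x : Multiplicative (Fin 2 → ZMod p), φ (ofAdd 1) x = x ^ r)

lemma ofAdd_one_pow (n : ℕ) : (ofAdd (1 : ZMod Q)) ^ n = ofAdd ((n : ZMod Q)) := by
  rw [← ofAdd_nsmul]
  congr 1
  simp

include hφ

lemma phi_pow : ∀ (n : ℕ) (x : Multiplicative (Fin 2 → ZMod p)),
    φ ((ofAdd (1 : ZMod Q)) ^ n) x = x ^ (r ^ n) := by
  intro n
  induction n with
  | zero => intro x; simp
  | succ n ih =>
    intro x
    rw [pow_succ, map_mul, MulAut.mul_apply, hφ, ih (x ^ r), ← pow_mul, ← pow_succ']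

lemma phi_apply (c : Multiplicative (ZMod Q)) (x : Multiplicative (Fin 2 → ZMod p)) :
    φ c x = x ^ (r ^ (toAdd c).val) := by
  have h := phi_pow φ hφ ((toAdd c).val) x
  rw [ofAdd_one_pow, ZMod.natCast_rightInverse (toAdd c), ofAdd_toAdd] at h
  exact h

end Phi

section Theta

variable {p Q r : ℕ} [Fact p.Prime] [NeZero Q]
  (φ : Multiplicative (ZMod Q) →* MulAut (Multiplicative (Fin 2 → ZMod p)))

lemma sZ_val_add (hQ : 1 < Q) (hr : orderOf (r : ZMod p) = Q) (c c' : ZMod Q) :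
    sZ p r ((c + c').val) = sZ p r c.val + (r : ZMod p) ^ c.val * sZ p r c'.val := by
  rw [← sZ_add]
  refine sZ_mod hQ hr ?_
  rw [ZMod.val_add]
  exact Nat.mod_modEq _ _

/-- The candidate automorphism of `G` given by `w ∈ (ZMod p)²` and `B ∈ GL 2 (ZMod p)`,
as a bare monoid hom. -/
def theta (hQ : 1 < Q) (hr : orderOf (r : ZMod p) = Q)
    (hφ : ∀ x : Multiplicative (Fin 2 → ZMod p), φ (ofAdd 1) x = x ^ r)
    (w : Fin 2 → ZMod p) (B : GL (Fin 2) (ZMod p)) :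
    (Multiplicative (Fin 2 → ZMod p) ⋊[φ] Multiplicative (ZMod Q)) →*
      (Multiplicative (Fin 2 → ZMod p) ⋊[φ] Multiplicative (ZMod Q)) where
  toFun g :=
    ⟨ofAdd ((B : Matrix (Fin 2) (Fin 2) (ZMod p)).mulVec (toAdd g.left) +
        sZ p r (toAdd g.right).val • w), g.right⟩
  map_one' := by
    ext <;> simp [sZ_zero]
  map_mul' g h := by
    ext
    · apply Multiplicative.toAdd.injective
      simp only [mul_left, mul_right, toAdd_mul, toAdd_ofAdd, phi_apply φ hφ, toAdd_pow,
        ← Nat.cast_smul_eq_nsmul (ZMod p), Nat.cast_pow]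
      rw [sZ_val_add hQ hr]
      rw [Matrix.mulVec_add, Matrix.mulVec_smul]
      congr 1
      simp only [Pi.add_apply, Pi.smul_apply, smul_eq_mul, mul_add, add_mul]
      change (_ : ZMod p) = _
      ring
    · simp [mul_right]

variable (hQ : 1 < Q) (hr : orderOf (r : ZMod p) = Q)
  (hφ : ∀ x : Multiplicative (Fin 2 → ZMod p), φ (ofAdd 1) x = x ^ r)

lemma theta_apply (w : Fin 2 → ZMod p) (B : GL (Fin 2) (ZMod p))
    (g : Multiplicative (Fin 2 → ZMod p) ⋊[φ] Multiplicative (ZMod Q)) :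
    theta φ hQ hr hφ w B g =
      ⟨ofAdd ((B : Matrix (Fin 2) (Fin 2) (ZMod p)).mulVec (toAdd g.left) +
        sZ p r (toAdd g.right).val • w), g.right⟩ := rfl

lemma theta_comp (w w' : Fin 2 → ZMod p) (B B' : GL (Fin 2) (ZMod p))
    (g : Multiplicative (Fin 2 → ZMod p) ⋊[φ] Multiplicative (ZMod Q)) :
    theta φ hQ hr hφ w B (theta φ hQ hr hφ w' B' g) =
      theta φ hQ hr hφ (w + (B : Matrix (Fin 2) (Fin 2) (ZMod p)).mulVec w') (B * B') g := by
  rw [theta_apply, theta_apply, theta_apply]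
  ext
  · apply Multiplicative.toAdd.injective
    simp only [toAdd_ofAdd, Matrix.mulVec_add, Matrix.mulVec_smul, Matrix.mulVec_mulVec,
      Matrix.GeneralLinearGroup.coe_mul, smul_add]
    congr 1
    simp only [Pi.add_apply, Pi.smul_apply, smul_eq_mul, mul_add, add_mul]
    change (_ : ZMod p) = _
    ring
  · rfl

lemma theta_id (g : Multiplicative (Fin 2 → ZMod p) ⋊[φ] Multiplicative (ZMod Q)) :
    theta φ hQ hr hφ 0 1 g = g := by
  rw [theta_apply]
  ext
  · apply Multiplicative.toAdd.injective
    simp [Matrix.one_mulVec]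
  · rfl

/-- The candidate automorphism of `G`, as a `MulAut`. -/
def thetaEquiv (w : Fin 2 → ZMod p) (B : GL (Fin 2) (ZMod p)) :
    MulAut (Multiplicative (Fin 2 → ZMod p) ⋊[φ] Multiplicative (ZMod Q)) where
  toFun := theta φ hQ hr hφ w B
  invFun := theta φ hQ hr hφ
    (-((B⁻¹ : GL (Fin 2) (ZMod p)) : Matrix (Fin 2) (Fin 2) (ZMod p)).mulVec w) B⁻¹
  left_inv g := by
    rw [theta_comp]
    rw [show -((B⁻¹ : GL (Fin 2) (ZMod p)) : Matrix (Fin 2) (Fin 2) (ZMod p)).mulVec w +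
        ((B⁻¹ : GL (Fin 2) (ZMod p)) : Matrix (Fin 2) (Fin 2) (ZMod p)).mulVec w = 0 from
      neg_add_cancel _, inv_mul_cancel B]
    exact theta_id φ hQ hr hφ g
  right_inv g := by
    rw [theta_comp]
    rw [show w + (B : Matrix (Fin 2) (Fin 2) (ZMod p)).mulVec
        (-((B⁻¹ : GL (Fin 2) (ZMod p)) : Matrix (Fin 2) (Fin 2) (ZMod p)).mulVec w) = 0 by
      rw [Matrix.mulVec_neg, Matrix.mulVec_mulVec,
        show (B : Matrix (Fin 2) (Fin 2) (ZMod p)) *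
          ((B⁻¹ : GL (Fin 2) (ZMod p)) : Matrix (Fin 2) (Fin 2) (ZMod p)) = 1 from
          Units.mul_inv B, Matrix.one_mulVec]
      exact add_neg_cancel w, mul_inv_cancel B]
    exact theta_id φ hQ hr hφ g
  map_mul' := (theta φ hQ hr hφ w B).map_mul

/-- The monoid hom `(Z_p² ⋊ GL₂) →* Aut (Z_p² ⋊ Z_Q)`. -/
def Theta :
    (Multiplicative (Fin 2 → ZMod p) ⋊[psi p] GL (Fin 2) (ZMod p)) →*
      MulAut (Multiplicative (Fin 2 → ZMod p) ⋊[φ] Multiplicative (ZMod Q)) where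
  toFun z := thetaEquiv φ hQ hr hφ (toAdd z.left) z.right
  map_one' := by
    refine DFunLike.ext _ _ fun g => ?_
    show theta φ hQ hr hφ (toAdd (1 : Multiplicative (Fin 2 → ZMod p))) 1 g = g
    simpa using theta_id φ hQ hr hφ g
  map_mul' z z' := by
    refine DFunLike.ext _ _ fun g => ?_
    show theta φ hQ hr hφ (toAdd (z * z').left) (z * z').right g =
      theta φ hQ hr hφ (toAdd z.left) z.right
        (theta φ hQ hr hφ (toAdd z'.left) z'.right g)
    rw [theta_comp]
    congr 1

lemma Theta_apply (z : Multiplicative (Fin 2 → ZMod p) ⋊[psi p] GL (Fin 2) (ZMod p))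
    (g : Multiplicative (Fin 2 → ZMod p) ⋊[φ] Multiplicative (ZMod Q)) :
    Theta φ hQ hr hφ z g = theta φ hQ hr hφ (toAdd z.left) z.right g := rfl

lemma mat_ext {A B : Matrix (Fin 2) (Fin 2) (ZMod p)}
    (h : ∀ v, A.mulVec v = B.mulVec v) : A = B := by
  ext i j
  have := congrFun (h (Pi.single j 1)) i
  simpa [Matrix.mulVec_single] using this

lemma Theta_injective : Function.Injective (Theta φ hQ hr hφ) := by
  haveI : Fact (1 < Q) := ⟨hQ⟩
  rw [injective_iff_map_eq_one]
  intro z hz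
  have hB : ∀ v : Fin 2 → ZMod p,
      ((z.right : GL (Fin 2) (ZMod p)) : Matrix (Fin 2) (Fin 2) (ZMod p)).mulVec v = v := by
    intro v
    have h2 := DFunLike.congr_fun hz (inl (ofAdd v))
    rw [Theta_apply, theta_apply] at h2
    have h3 := congrArg SemidirectProduct.left h2
    simpa [sZ_zero] using h3
  have hBone : z.right = 1 := Units.ext (mat_ext (fun v => by rw [hB]; simp [Matrix.one_mulVec]))
  have hvone : z.left = 1 := by
    have h2 := DFunLike.congr_fun hz (inr (ofAdd (1 : ZMod Q)))
    rw [Theta_apply, theta_apply] at h2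
    have h3 := congrArg SemidirectProduct.left h2
    simp [ZMod.val_one, sZ_one, Matrix.mulVec_zero] at h3
    exact h3
  ext
  · rw [hvone]; rfl
  · rw [hBone]; rfl

lemma Theta_surjective (hcop : Nat.Coprime p Q) :
    Function.Surjective (Theta φ hQ hr hφ) := by
  haveI : NeZero p := ⟨(Fact.out : p.Prime).ne_zero⟩
  intro β
  -- p-torsion and Q-torsion
  have hMVpow : ∀ x : Multiplicative (Fin 2 → ZMod p), x ^ p = 1 := by
    intro x
    apply Multiplicative.toAdd.injective
    rw [toAdd_pow]
    funext i
    show p • (toAdd x i) = (0 : ZMod p)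
    rw [nsmul_eq_mul, ZMod.natCast_self, zero_mul]
  have hCpow : ∀ c : Multiplicative (ZMod Q), c ^ Q = 1 := by
    intro c
    apply Multiplicative.toAdd.injective
    rw [toAdd_pow]
    show Q • (toAdd c) = (0 : ZMod Q)
    rw [nsmul_eq_mul, ZMod.natCast_self, zero_mul]
  -- Step A: any automorphism preserves the subgroup inl(MV)
  have hker : ∀ (γ : MulAut (Multiplicative (Fin 2 → ZMod p) ⋊[φ] Multiplicative (ZMod Q)))
      (x : Multiplicative (Fin 2 → ZMod p)), (γ (inl x)).right = 1 := by
    intro γ x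
    have h1 : ((γ (inl x)).right) ^ p = 1 := by
      have : rightHom (γ (inl x)) ^ p = 1 := by
        rw [← map_pow, ← map_pow, ← map_pow, hMVpow, map_one, map_one, map_one]
      exact this
    have h2 : ((γ (inl x)).right) ^ Q = 1 := hCpow _
    have hd : orderOf ((γ (inl x)).right) ∣ Nat.gcd p Q :=
      Nat.dvd_gcd (orderOf_dvd_of_pow_eq_one h1) (orderOf_dvd_of_pow_eq_one h2)
    rw [hcop, Nat.dvd_one] at hd
    exact orderOf_eq_one_iff.mp hd
  have hrep : ∀ (γ : MulAut (Multiplicative (Fin 2 → ZMod p) ⋊[φ] Multiplicative (ZMod Q)))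
      (x : Multiplicative (Fin 2 → ZMod p)), γ (inl x) = inl ((γ (inl x)).left) := by
    intro γ x
    conv_lhs => rw [← inl_left_mul_inr_right (γ (inl x))]
    rw [hker γ x, map_one, mul_one]
  -- The restriction to MV and its inverse
  have hLmul : ∀ x y : Multiplicative (Fin 2 → ZMod p),
      (β (inl (x * y))).left = (β (inl x)).left * (β (inl y)).left := by
    intro x y
    apply inl_injective (φ := φ)
    calc (inl ((β (inl (x * y))).left) : _ ⋊[φ] _) = β (inl (x * y)) := (hrep β _).symm
      _ = β (inl x) * β (inl y) := by rw [← map_mul, ← map_mul]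
      _ = inl ((β (inl x)).left * (β (inl y)).left) := by
          rw [hrep β x, hrep β y, ← map_mul]; simp
  have hL'L : ∀ x : Multiplicative (Fin 2 → ZMod p),
      (β.symm (inl ((β (inl x)).left))).left = x := by
    intro x
    apply inl_injective (φ := φ)
    calc (inl ((β.symm (inl ((β (inl x)).left))).left) : _ ⋊[φ] _)
        = β.symm (inl ((β (inl x)).left)) := (hrep β.symm _).symm
      _ = β.symm (β (inl x)) := by rw [← hrep β x]
      _ = inl x := β.symm_apply_apply _
  have hLL' : ∀ x : Multiplicative (Fin 2 → ZMod p),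
      (β (inl ((β.symm (inl x)).left))).left = x := by
    intro x
    apply inl_injective (φ := φ)
    calc (inl ((β (inl ((β.symm (inl x)).left))).left) : _ ⋊[φ] _)
        = β (inl ((β.symm (inl x)).left)) := (hrep β _).symm
      _ = β (β.symm (inl x)) := by rw [← hrep β.symm x]
      _ = inl x := β.apply_symm_apply _
  -- the matrix of the restriction of an automorphism to MV
  have hLmulγ : ∀ (γ : MulAut (Multiplicative (Fin 2 → ZMod p) ⋊[φ] Multiplicative (ZMod Q)))
      (x y : Multiplicative (Fin 2 → ZMod p)),
      (γ (inl (x * y))).left = (γ (inl x)).left * (γ (inl y)).left := by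
    intro γ x y
    apply inl_injective (φ := φ)
    calc (inl ((γ (inl (x * y))).left) : _ ⋊[φ] _) = γ (inl (x * y)) := (hrep γ _).symm
      _ = γ (inl x) * γ (inl y) := by rw [← map_mul, ← map_mul]
      _ = inl ((γ (inl x)).left * (γ (inl y)).left) := by
          rw [hrep γ x, hrep γ y, ← map_mul]; simp
  have hmat : ∀ (γ : MulAut (Multiplicative (Fin 2 → ZMod p) ⋊[φ] Multiplicative (ZMod Q))),
      ∃ M : Matrix (Fin 2) (Fin 2) (ZMod p), ∀ v : Fin 2 → ZMod p,
        M.mulVec v = toAdd ((γ (inl (ofAdd v))).left) := by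
    intro γ
    set F : (Fin 2 → ZMod p) → (Fin 2 → ZMod p) :=
      fun v => toAdd ((γ (inl (ofAdd v))).left) with hFdef
    have hFadd : ∀ u v, F (u + v) = F u + F v := by
      intro u v
      show toAdd ((γ (inl (ofAdd (u + v)))).left) = _
      rw [show (ofAdd (u + v) : Multiplicative (Fin 2 → ZMod p)) = ofAdd u * ofAdd v from rfl,
        hLmulγ γ, toAdd_mul]
    have hFn : ∀ (n : ℕ) v, F (n • v) = n • F v := by
      intro n v
      induction n with
      | zero =>
        have h0 : F 0 = 0 := by
          have h := hFadd 0 0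
          rw [add_zero] at h
          exact (left_eq_add.mp h)
        simpa using h0
      | succ n ih => rw [succ_nsmul, succ_nsmul, hFadd, ih]
    have hFsmul : ∀ (c : ZMod p) v, F (c • v) = c • F v := by
      intro c v
      have hc : ((c.val : ℕ) : ZMod p) = c := ZMod.natCast_rightInverse c
      rw [← hc, Nat.cast_smul_eq_nsmul, Nat.cast_smul_eq_nsmul, hFn]
    refine ⟨Matrix.of (fun i j => F (Pi.single j 1) i), ?_⟩
    intro v
    have hv : v = v 0 • (Pi.single (0 : Fin 2) (1 : ZMod p) : Fin 2 → ZMod p) + v 1 • (Pi.single (1 : Fin 2) (1 : ZMod p) : Fin 2 → ZMod p) := by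
      funext k
      fin_cases k <;> simp [Pi.single_apply]
    have hFv : F v = v 0 • F (Pi.single (0 : Fin 2) (1 : ZMod p) : Fin 2 → ZMod p) + v 1 • F (Pi.single (1 : Fin 2) (1 : ZMod p) : Fin 2 → ZMod p) := by
      conv_lhs => rw [hv]
      rw [hFadd, hFsmul, hFsmul]
    show _ = F v
    rw [hFv]
    funext i
    simp [Matrix.mulVec, dotProduct, Fin.sum_univ_two, mul_comm]
  obtain ⟨M, hM⟩ := hmat β
  obtain ⟨M', hM'⟩ := hmat β.symm
  have hMM' : M * M' = 1 := by
    refine mat_ext fun v => ?_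
    rw [← Matrix.mulVec_mulVec, hM', hM, ofAdd_toAdd, hLL', Matrix.one_mulVec, toAdd_ofAdd]
  have hM'M : M' * M = 1 := by
    refine mat_ext fun v => ?_
    rw [← Matrix.mulVec_mulVec, hM, hM', ofAdd_toAdd, hL'L, Matrix.one_mulVec, toAdd_ofAdd]
  -- Step B: the image of the generator of the cyclic part
  set u : (Multiplicative (Fin 2 → ZMod p) ⋊[φ] Multiplicative (ZMod Q)) :=
    β (inr (ofAdd (1 : ZMod Q))) with hu
  have hLpow : ∀ (x : Multiplicative (Fin 2 → ZMod p)) (n : ℕ),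
      (β (inl (x ^ n))).left = ((β (inl x)).left) ^ n := by
    intro x n
    induction n with
    | zero => simp
    | succ n ih => rw [pow_succ, hLmulγ β, ih, pow_succ]
  have hphiu : ∀ y : Multiplicative (Fin 2 → ZMod p), φ u.right y = y ^ r := by
    intro y
    have h2 := congrArg β (inl_aut (φ := φ) (ofAdd (1 : ZMod Q)) ((β.symm (inl y)).left))
    rw [map_mul, map_mul, map_inv, map_inv] at h2
    rw [hφ] at h2
    have hx : (β (inl ((β.symm (inl y)).left))) = inl y := by
      rw [hrep β, hLL']
    have hxr : β (inl (((β.symm (inl y)).left) ^ r)) = inl (y ^ r) := by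
      rw [hrep β, hLpow, hLL']
    rw [hxr, hx] at h2
    have h3 : u * inl y * u⁻¹ = inl (φ u.right y) := by
      conv_lhs => rw [← inl_left_mul_inr_right u]
      rw [mul_inv_rev, ← map_inv, ← map_inv]
      calc inl u.left * inr u.right * inl y * (inr u.right⁻¹ * inl u.left⁻¹)
          = inl u.left * (inr u.right * inl y * inr u.right⁻¹) * inl u.left⁻¹ := by
            group
        _ = inl u.left * inl (φ u.right y) * inl u.left⁻¹ := by rw [← inl_aut]
        _ = inl (u.left * φ u.right y * u.left⁻¹) := by rw [← map_mul, ← map_mul]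
        _ = inl (φ u.right y) := by
            rw [mul_comm u.left, mul_assoc, mul_inv_cancel, mul_one]
    have h2' : inl (y ^ r) = u * inl y * u⁻¹ := by rw [hu]; exact h2
    rw [h3] at h2'
    exact (inl_injective h2').symm
  have hrQpow : (r : ZMod p) ^ Q = 1 := by rw [← hr]; exact pow_orderOf_eq_one _
  have hrne : (r : ZMod p) ≠ 0 := by
    intro h0
    rw [h0, zero_pow (by omega : Q ≠ 0)] at hrQpow
    exact zero_ne_one hrQpow
  have hn1 : (toAdd u.right).val = 1 := by
    have h4 := hphiu (ofAdd (fun _ => (1 : ZMod p)))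
    rw [phi_apply φ hφ] at h4
    have h5 := congrFun (congrArg Multiplicative.toAdd h4) 0
    rw [toAdd_pow, toAdd_pow, toAdd_ofAdd] at h5
    have h6 : (r : ZMod p) ^ ((toAdd u.right).val) = (r : ZMod p) ^ 1 := by
      simp only [Pi.smul_apply, nsmul_eq_mul, mul_one, pow_one] at h5 ⊢
      push_cast at h5
      simpa using h5
    have hnlt : (toAdd u.right).val < Q := ZMod.val_lt _
    rcases Nat.eq_zero_or_pos ((toAdd u.right).val) with hn0 | hnpos
    · exfalso
      rw [hn0, pow_zero, pow_one] at h6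
      rw [← h6, orderOf_one] at hr
      omega
    · obtain ⟨m, hm⟩ : ∃ m, (toAdd u.right).val = m + 1 :=
        ⟨(toAdd u.right).val - 1, by omega⟩
      rw [hm, pow_succ, pow_one] at h6
      have h7 : (r : ZMod p) ^ m = 1 :=
        mul_right_cancel₀ hrne (h6.trans (one_mul _).symm)
      have h8 : Q ∣ m := hr ▸ orderOf_dvd_of_pow_eq_one h7
      have h9 : m = 0 := Nat.eq_zero_of_dvd_of_lt h8 (by omega)
      omega
  have hu2 : u.right = ofAdd (1 : ZMod Q) := by
    apply Multiplicative.toAdd.injective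
    have hv := ZMod.natCast_rightInverse (toAdd u.right)
    rw [← hv, hn1]
    simp
  -- Step C: assemble the preimage
  refine ⟨⟨u.left, ⟨M, M', hMM', hM'M⟩⟩, ?_⟩
  refine DFunLike.ext _ _ fun g => ?_
  have key_inl : ∀ x : Multiplicative (Fin 2 → ZMod p),
      Theta φ hQ hr hφ ⟨u.left, ⟨M, M', hMM', hM'M⟩⟩ (inl x) = β (inl x) := by
    intro x
    rw [Theta_apply, theta_apply, hrep β x]
    ext : 1
    · show ofAdd (M.mulVec (toAdd x) +
          sZ p r (toAdd (1 : Multiplicative (ZMod Q))).val • toAdd u.left) = (β (inl x)).left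
      rw [toAdd_one, ZMod.val_zero, sZ_zero, zero_smul, add_zero, hM, ofAdd_toAdd, ofAdd_toAdd]
    · rfl
  have key_inr : ∀ c : Multiplicative (ZMod Q),
      Theta φ hQ hr hφ ⟨u.left, ⟨M, M', hMM', hM'M⟩⟩ (inr c) = β (inr c) := by
    intro c
    have hupow : ∀ n : ℕ, u ^ n = ⟨u.left ^ (sN r n), u.right ^ n⟩ := by
      intro n
      induction n with
      | zero => ext <;> simp [sN]
      | succ n ih =>
        rw [pow_succ, ih]
        ext : 1
        · show (u.left ^ sN r n) * φ (u.right ^ n) u.left = u.left ^ sN r (n + 1)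
          rw [hu2, phi_pow φ hφ n, ← pow_add]
          congr 1
          simp [sN, Finset.sum_range_succ]
        · show u.right ^ n * u.right = u.right ^ (n + 1)
          rw [pow_succ]
    have hcpow : (inr (ofAdd (1 : ZMod Q)) : _ ⋊[φ] _) ^ ((toAdd c).val) = inr c := by
      rw [← map_pow, ofAdd_one_pow, ZMod.natCast_rightInverse (toAdd c), ofAdd_toAdd]
    have hrhs : β (inr c) = ⟨u.left ^ (sN r ((toAdd c).val)), c⟩ := by
      rw [← hcpow, map_pow, ← hu, hupow]
      congr 1
      rw [hu2, ofAdd_one_pow, ZMod.natCast_rightInverse (toAdd c), ofAdd_toAdd]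
    rw [hrhs, Theta_apply, theta_apply]
    ext : 1
    · show ofAdd (M.mulVec (toAdd (1 : Multiplicative (Fin 2 → ZMod p))) +
          sZ p r (toAdd c).val • toAdd u.left) = u.left ^ (sN r ((toAdd c).val))
      apply Multiplicative.toAdd.injective
      rw [toAdd_ofAdd, toAdd_pow, toAdd_one, Matrix.mulVec_zero, zero_add, sZ,
        Nat.cast_smul_eq_nsmul]
    · rfl
  calc (Theta φ hQ hr hφ) ⟨u.left, ⟨M, M', hMM', hM'M⟩⟩ g
      = Theta φ hQ hr hφ ⟨u.left, ⟨M, M', hMM', hM'M⟩⟩ (inl g.left * inr g.right) := by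
        rw [inl_left_mul_inr_right]
    _ = Theta φ hQ hr hφ ⟨u.left, ⟨M, M', hMM', hM'M⟩⟩ (inl g.left) *
        Theta φ hQ hr hφ ⟨u.left, ⟨M, M', hMM', hM'M⟩⟩ (inr g.right) := map_mul _ _ _
    _ = β (inl g.left) * β (inr g.right) := by rw [key_inl, key_inr]
    _ = β g := by rw [← map_mul, inl_left_mul_inr_right]

end Theta

end Stmt17


theorem stmt_17 (p q : ℕ) (hp : p.Prime) (hq : q.Prime) (hpq : p ≠ q)
    (hdvd : q ^ 2 ∣ p - 1) (r : ℕ) (hr : orderOf ((r : ZMod p)) = q ^ 2)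
    (φ : Multiplicative (ZMod (q ^ 2)) →* MulAut (Multiplicative (Fin 2 → ZMod p)))
    (hφ : ∀ x : Multiplicative (Fin 2 → ZMod p),
      φ (Multiplicative.ofAdd 1) x = x ^ r) :
    ∃ ψ : GL (Fin 2) (ZMod p) →* MulAut (Multiplicative (Fin 2 → ZMod p)),
      (∀ (g : GL (Fin 2) (ZMod p)) (v : Fin 2 → ZMod p),
        ψ g (Multiplicative.ofAdd v) =
          Multiplicative.ofAdd
            ((g : Matrix (Fin 2) (Fin 2) (ZMod p)).mulVec v)) ∧
      Nonempty
        (MulAut (Multiplicative (Fin 2 → ZMod p) ⋊[φ] Multiplicative (ZMod (q ^ 2))) ≃*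
          Multiplicative (Fin 2 → ZMod p) ⋊[ψ] GL (Fin 2) (ZMod p)) := by
  haveI : Fact p.Prime := ⟨hp⟩
  haveI : NeZero (q ^ 2) := ⟨pow_ne_zero 2 hq.ne_zero⟩
  have hQ : 1 < q ^ 2 := Nat.one_lt_pow (by norm_num) hq.one_lt
  have hcop : Nat.Coprime p (q ^ 2) := ((Nat.coprime_primes hp hq).mpr hpq).pow_right 2
  refine ⟨Stmt17.psi p, fun g v => rfl, ⟨?_⟩⟩
  exact (MulEquiv.ofBijective (Stmt17.Theta φ hQ hr hφ)
    ⟨Stmt17.Theta_injective φ hQ hr hφ, Stmt17.Theta_surjective φ hQ hr hφ hcop⟩).symm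
end

section
/- Let p be an odd prime and G = ⟨a, b, c, d | a^2 = b^2 = c^p = d^p = 1, all pairs commute except b⁻¹cb = c⁻¹⟩, a group of order 4p^2 isomorphic to (Z_p × Z_p) ⋊ (Z_2 × Z_2) where b inverts c and everything else commutes. Then Aut(G) is isomorphic to Z_p ⋊ ((Z_{p-1} × Z_{p-1}) × Z_2). -/
open Multiplicative SemidirectProduct

namespace Stmt18

abbrev Q2 := Multiplicative (ZMod 2) × Multiplicative (ZMod 2)
abbrev Pp (p : ℕ) := Multiplicative (ZMod p) × Multiplicative (ZMod p)

lemma q_cases (s : Multiplicative (ZMod 2)) : s = 1 ∨ s = ofAdd 1 := by revert s; decide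

lemma q_sq (s : Multiplicative (ZMod 2)) : s * s = 1 := by revert s; decide

lemma q_mul_comm (a b : Multiplicative (ZMod 2)) : a * b = b * a := mul_comm a b

section

variable {p : ℕ} (φ : Q2 →* MulAut (Pp p))

def cg : Pp p ⋊[φ] Q2 := inl (ofAdd 1, 1)
def dg : Pp p ⋊[φ] Q2 := inl (1, ofAdd 1)
def ag : Pp p ⋊[φ] Q2 := inr (ofAdd 1, 1)
def bg : Pp p ⋊[φ] Q2 := inr (1, ofAdd 1)

variable (hφa : ∀ x : Pp p, φ (ofAdd 1, 1) x = x)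
  (hφb : ∀ x : Pp p, φ (1, ofAdd 1) x = (x.1⁻¹, x.2))

include hφa hφb in
lemma phi_apply (s t : Multiplicative (ZMod 2)) (x : Pp p) :
    φ (s, t) x = (if t = 1 then x.1 else x.1⁻¹, x.2) := by
  have key : ∀ y : Pp p, φ (ofAdd 1, ofAdd 1) y = (y.1⁻¹, y.2) := by
    intro y
    have h : ((ofAdd 1, ofAdd 1) : Q2) = (ofAdd 1, 1) * (1, ofAdd 1) := by decide
    rw [h, map_mul, MulAut.mul_apply, hφb, hφa]
  rcases q_cases s with hs | hs <;> rcases q_cases t with ht | ht <;> subst hs <;> subst ht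
  · simp
    rw [show ((1, 1) : Q2) = 1 from rfl, map_one]; rfl
  · rw [hφb]; simp [if_neg (by decide : ¬ (ofAdd 1 : Multiplicative (ZMod 2)) = 1)]
  · rw [hφa]; simp
  · rw [key]; simp [if_neg (by decide : ¬ (ofAdd 1 : Multiplicative (ZMod 2)) = 1)]

include hφa hφb in
lemma phi_apply₂ (q : Q2) (x : Pp p) :
    φ q x = (if q.2 = 1 then x.1 else x.1⁻¹, x.2) := by
  obtain ⟨s, t⟩ := q; exact phi_apply φ hφa hφb s t x

/-- The explicit automorphism family, as a raw map. -/
def Fmap (m n k : ZMod p) (s : Multiplicative (ZMod 2)) (g : Pp p ⋊[φ] Q2) :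
    Pp p ⋊[φ] Q2 :=
  ⟨(ofAdd (m * toAdd g.left.1 + if g.right.2 = 1 then 0 else k),
    ofAdd (n * toAdd g.left.2)),
   (g.right.1 * if g.right.2 = 1 then 1 else s, g.right.2)⟩

include hφa hφb in
set_option maxRecDepth 40000 in
lemma Fmap_mul (m n k : ZMod p) (s : Multiplicative (ZMod 2)) (g g' : Pp p ⋊[φ] Q2) :
    Fmap φ m n k s (g * g') = Fmap φ m n k s g * Fmap φ m n k s g' := by
  obtain ⟨⟨x, y⟩, s₁, t₁⟩ := g
  obtain ⟨⟨x', y'⟩, s₂, t₂⟩ := g'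
  rcases q_cases t₁ with ht | ht <;> subst ht <;>
    rcases q_cases t₂ with ht' | ht' <;> subst ht' <;>
    apply SemidirectProduct.ext <;>
    simp [Fmap, phi_apply₂ φ hφa hφb, ← ofAdd_add, ← ofAdd_neg, ← ofAdd_sub,
      (by decide : ¬ (ofAdd 1 : Multiplicative (ZMod 2)) = 1),
      (by decide : (ofAdd 1 * ofAdd 1 : Multiplicative (ZMod 2)) = 1)] <;>
    first
      | (revert s₁ s₂ s; decide)
      | (constructor <;> ring1)
      | (constructor <;> (congr 1 <;> ring1))
      | (congr 1 <;> ring1)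

lemma Fmap_comp (m n k : ZMod p) (s : Multiplicative (ZMod 2))
    (m' n' k' : ZMod p) (s' : Multiplicative (ZMod 2)) (g : Pp p ⋊[φ] Q2) :
    Fmap φ m n k s (Fmap φ m' n' k' s' g) =
      Fmap φ (m * m') (n * n') (m * k' + k) (s * s') g := by
  obtain ⟨⟨x, y⟩, s₁, t₁⟩ := g
  rcases q_cases t₁ with ht | ht <;> subst ht <;>
    apply SemidirectProduct.ext <;>
    simp [Fmap, ← ofAdd_add,
      (by decide : ¬ (ofAdd 1 : Multiplicative (ZMod 2)) = 1)] <;>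
    first
      | (revert s₁ s s'; decide)
      | (constructor <;> first | ring1 | (congr 1 <;> ring1))
      | ring1
      | (congr 1 <;> ring1)

lemma Fmap_id (g : Pp p ⋊[φ] Q2) : Fmap φ 1 1 0 1 g = g := by
  obtain ⟨⟨x, y⟩, s₁, t₁⟩ := g
  rcases q_cases t₁ with ht | ht <;> subst ht <;>
    apply SemidirectProduct.ext <;>
    simp [Fmap]

/-- The explicit automorphisms of `G`. -/
def Fexp (m n : (ZMod p)ˣ) (k : ZMod p) (s : Multiplicative (ZMod 2)) :
    MulAut (Pp p ⋊[φ] Q2) where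
  toFun := Fmap φ (↑m) (↑n) k s
  invFun := Fmap φ (↑m⁻¹) (↑n⁻¹) (-(↑m⁻¹ * k)) s
  left_inv g := by
    rw [Fmap_comp]
    have hk : (↑m⁻¹ : ZMod p) * k + -(↑m⁻¹ * k) = 0 := by ring
    rw [hk, Units.inv_mul, Units.inv_mul, q_sq, Fmap_id]
  right_inv g := by
    rw [Fmap_comp]
    have hk : (↑m : ZMod p) * -(↑m⁻¹ * k) + k = 0 := by
      rw [(by ring : (↑m : ZMod p) * -(↑m⁻¹ * k) + k = -((↑m * ↑m⁻¹) * k) + k),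
        Units.mul_inv]; ring
    rw [hk, Units.mul_inv, Units.mul_inv, q_sq, Fmap_id]
  map_mul' := Fmap_mul φ hφa hφb (↑m) (↑n) k s

lemma Fexp_apply (m n : (ZMod p)ˣ) (k : ZMod p) (s : Multiplicative (ZMod 2))
    (g : Pp p ⋊[φ] Q2) : Fexp φ hφa hφb m n k s g = Fmap φ (↑m) (↑n) k s g := rfl

lemma Fexp_mul (m n m' n' : (ZMod p)ˣ) (k k' : ZMod p)
    (s s' : Multiplicative (ZMod 2)) :
    Fexp φ hφa hφb m n k s * Fexp φ hφa hφb m' n' k' s' =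
      Fexp φ hφa hφb (m * m') (n * n') (↑m * k' + k) (s * s') := by
  apply MulEquiv.ext
  intro g
  show Fmap φ (↑m) (↑n) k s (Fmap φ (↑m') (↑n') k' s' g) = _
  rw [Fmap_comp, Fexp_apply, Units.val_mul, Units.val_mul]

variable (hp : p.Prime) (hodd : p ≠ 2)

include hp hodd in
lemma two_ne_zero' : (2 : ZMod p) ≠ 0 := by
  intro h
  have h2 : ((2 : ℕ) : ZMod p) = 0 := by exact_mod_cast h
  have := (ZMod.natCast_eq_zero_iff 2 p).mp h2
  have := (Nat.prime_dvd_prime_iff_eq hp Nat.prime_two).mp this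
  exact hodd this

include hp hodd in
lemma half_zero (v : ZMod p) (h : v + v = 0) : v = 0 := by
  haveI : Fact p.Prime := ⟨hp⟩
  have h2 : (2 : ZMod p) * v = 0 := by rw [two_mul]; exact h
  rcases mul_eq_zero.mp h2 with h' | h'
  · exact absurd h' (two_ne_zero' hp hodd)
  · exact h'

include hp hodd in
lemma mul_self_one (v : Multiplicative (ZMod p)) (h : v * v = 1) : v = 1 := by
  have : toAdd v + toAdd v = 0 := by
    have := congrArg toAdd h; simpa using this
  have := half_zero hp hodd _ this
  have : v = ofAdd 0 := by rw [← this]; simp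
  simpa using this

include hp hodd in
lemma right_eq_one_of_pow_p (g : Pp p ⋊[φ] Q2) (h : g ^ p = 1) : g.right = 1 := by
  have hq : (rightHom g : Q2) ^ p = 1 := by
    rw [← map_pow, h, map_one]
  obtain ⟨j, hj⟩ := hp.odd_of_ne_two hodd
  have hsq : ∀ q : Q2, q ^ 2 = 1 := by decide
  have key : ∀ q : Q2, q ^ (2 * j + 1) = 1 → q = 1 := by
    intro q hq1
    rwa [pow_add, pow_mul, hsq q, one_pow, pow_one, one_mul] at hq1
  exact key _ (by rw [← hj]; exact hq)

lemma conj_inl (g : Pp p ⋊[φ] Q2) (x : Pp p) :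
    g * inl x * g⁻¹ = inl (φ g.right x) := by
  apply SemidirectProduct.ext <;>
    simp [mul_assoc, map_mul, map_inv, MulAut.apply_inv_self] <;>
    simp [mul_comm, mul_left_comm]

include hφa hφb in
lemma bcb : bg φ * cg φ * (bg φ)⁻¹ = (cg φ)⁻¹ := by
  have hrhs : (cg φ)⁻¹ = inl ((ofAdd 1, 1) : Pp p)⁻¹ :=
    (map_inv (inl : Pp p →* Pp p ⋊[φ] Q2) _).symm
  rw [cg, bg, conj_inl, right_inr, hφb]
  rw [show ((inl ((ofAdd 1, 1) : Pp p))⁻¹ : Pp p ⋊[φ] Q2) = inl ((ofAdd 1, 1) : Pp p)⁻¹ from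
    (map_inv (inl : Pp p →* Pp p ⋊[φ] Q2) _).symm]
  congr 1
  simp [Prod.inv_mk]

lemma cg_pow_p : (cg φ) ^ p = 1 := by
  rw [cg, ← map_pow]
  have : ((ofAdd 1, 1) : Pp p) ^ p = 1 := by
    ext
    · show toAdd ((ofAdd (1 : ZMod p)) ^ p) = toAdd 1
      rw [toAdd_pow]
      simp [nsmul_eq_mul, ZMod.natCast_self]
    · simp [one_pow]
  rw [this, map_one]

lemma dg_pow_p : (dg φ) ^ p = 1 := by
  rw [dg, ← map_pow]
  have : ((1, ofAdd 1) : Pp p) ^ p = 1 := by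
    ext
    · simp [one_pow]
    · show toAdd ((ofAdd (1 : ZMod p)) ^ p) = toAdd 1
      rw [toAdd_pow]
      simp [nsmul_eq_mul, ZMod.natCast_self]
  rw [this, map_one]

lemma ag_sq : (ag φ) ^ 2 = 1 := by
  rw [ag, ← map_pow, (by decide : ((ofAdd 1, 1) : Q2) ^ 2 = 1), map_one]

lemma bg_sq : (bg φ) ^ 2 = 1 := by
  rw [bg, ← map_pow, (by decide : ((1, ofAdd 1) : Q2) ^ 2 = 1), map_one]

include hφa hφb in
lemma d_comm (g : Pp p ⋊[φ] Q2) : g * dg φ = dg φ * g := by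
  apply SemidirectProduct.ext <;>
    simp [dg, phi_apply₂ φ hφa hφb, mul_comm]

include hφa hφb in
lemma a_comm (g : Pp p ⋊[φ] Q2) : g * ag φ = ag φ * g := by
  apply SemidirectProduct.ext <;>
    simp [ag, phi_apply₂ φ hφa hφb, mul_comm]

def mPar (F : MulAut (Pp p ⋊[φ] Q2)) : ZMod p := toAdd ((F (cg φ)).left.1)
def nPar (F : MulAut (Pp p ⋊[φ] Q2)) : ZMod p := toAdd ((F (dg φ)).left.2)
def kPar (F : MulAut (Pp p ⋊[φ] Q2)) : ZMod p := toAdd ((F (bg φ)).left.1)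
def sPar (F : MulAut (Pp p ⋊[φ] Q2)) : Multiplicative (ZMod 2) := (F (bg φ)).right.1

include hφa hφb hp hodd in
lemma Fc_eq (F : MulAut (Pp p ⋊[φ] Q2)) : F (cg φ) = inl (ofAdd (mPar φ F), 1) := by
  have h1 : (F (cg φ)) ^ p = 1 := by rw [← map_pow, cg_pow_p, map_one]
  have h2 : (F (cg φ)).right = 1 := right_eq_one_of_pow_p φ hp hodd _ h1
  have h3 : F (cg φ) = inl ((F (cg φ)).left) := by
    apply SemidirectProduct.ext <;> simp [h2]
  have h4 : F (bg φ) * F (cg φ) * (F (bg φ))⁻¹ = (F (cg φ))⁻¹ := by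
    rw [← map_inv, ← map_mul, ← map_mul, bcb φ hφa hφb, map_inv]
  rw [h3, conj_inl] at h4
  rw [show ((inl ((F (cg φ)).left))⁻¹ : Pp p ⋊[φ] Q2) = inl ((F (cg φ)).left)⁻¹ from
    (map_inv (inl : Pp p →* Pp p ⋊[φ] Q2) _).symm] at h4
  have h5 : φ (F (bg φ)).right ((F (cg φ)).left) = ((F (cg φ)).left)⁻¹ :=
    inl_injective h4
  rw [phi_apply₂ φ hφa hφb] at h5
  have h6 : (F (cg φ)).left.2 = ((F (cg φ)).left.2)⁻¹ := by
    have := congrArg Prod.snd h5; simpa using this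
  have h7 : (F (cg φ)).left.2 = 1 := by
    apply mul_self_one hp hodd
    nth_rewrite 2 [h6]
    exact mul_inv_cancel _
  rw [h3]
  congr 1
  have : (F (cg φ)).left = ((F (cg φ)).left.1, (F (cg φ)).left.2) := rfl
  rw [this, h7]
  rfl

include hφa hφb hp hodd in
lemma mPar_ne (F : MulAut (Pp p ⋊[φ] Q2)) : mPar φ F ≠ 0 := by
  haveI : Fact p.Prime := ⟨hp⟩
  intro h
  have h1 : F (cg φ) = 1 := by
    rw [Fc_eq φ hφa hφb hp hodd F, h]
    simp
    exact map_one _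
  have h2 : cg φ = 1 := F.injective (h1.trans (map_one F).symm)
  have h3 : ((ofAdd 1, 1) : Pp p) = 1 := by
    rwa [cg, show (1 : Pp p ⋊[φ] Q2) = inl 1 from (map_one (inl : Pp p →* _)).symm,
      inl_inj] at h2
  have h4 : (1 : ZMod p) = 0 := by
    have := congrArg (fun z : Pp p => toAdd z.1) h3; simpa using this
  exact one_ne_zero h4

include hφa hφb hp hodd in
lemma Fd_eq (F : MulAut (Pp p ⋊[φ] Q2)) : F (dg φ) = inl (1, ofAdd (nPar φ F)) := by
  have h1 : (F (dg φ)) ^ p = 1 := by rw [← map_pow, dg_pow_p, map_one]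
  have h2 : (F (dg φ)).right = 1 := right_eq_one_of_pow_p φ hp hodd _ h1
  have h3 : F (dg φ) = inl ((F (dg φ)).left) := by
    apply SemidirectProduct.ext <;> simp [h2]
  have h4 : bg φ * F (dg φ) = F (dg φ) * bg φ := by
    obtain ⟨g', hg'⟩ := F.surjective (bg φ)
    rw [← hg', ← map_mul, ← map_mul, d_comm φ hφa hφb]
  rw [h3] at h4
  have h5 := congrArg SemidirectProduct.left h4
  simp [bg, hφb] at h5
  have h6 : (F (dg φ)).left.1 = 1 := by
    apply mul_self_one hp hodd
    have h6' : ((F (dg φ)).left.1)⁻¹ = (F (dg φ)).left.1 := by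
      have := congrArg Prod.fst h5; simpa using this
    nth_rewrite 1 [← h6']
    exact inv_mul_cancel _
  rw [h3]
  congr 1
  have : (F (dg φ)).left = ((F (dg φ)).left.1, (F (dg φ)).left.2) := rfl
  rw [this, h6]
  rfl

include hφa hφb hp hodd in
lemma nPar_ne (F : MulAut (Pp p ⋊[φ] Q2)) : nPar φ F ≠ 0 := by
  haveI : Fact p.Prime := ⟨hp⟩
  intro h
  have h1 : F (dg φ) = 1 := by
    rw [Fd_eq φ hφa hφb hp hodd F, h]
    simp
    exact map_one _
  have h2 : dg φ = 1 := F.injective (h1.trans (map_one F).symm)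
  have h3 : ((1, ofAdd 1) : Pp p) = 1 := by
    rwa [dg, show (1 : Pp p ⋊[φ] Q2) = inl 1 from (map_one (inl : Pp p →* _)).symm,
      inl_inj] at h2
  have h4 : (1 : ZMod p) = 0 := by
    have := congrArg (fun z : Pp p => toAdd z.2) h3; simpa using this
  exact one_ne_zero h4

include hφa hφb hp hodd in
lemma Fa_eq (F : MulAut (Pp p ⋊[φ] Q2)) : F (ag φ) = ag φ := by
  haveI : Fact p.Prime := ⟨hp⟩
  have hcen : ∀ g, g * F (ag φ) = F (ag φ) * g := by
    intro g; obtain ⟨g', rfl⟩ := F.surjective g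
    rw [← map_mul, ← map_mul, a_comm φ hφa hφb]
  -- step 1 : right.2 = 1
  have ht2 : (F (ag φ)).right.2 = 1 := by
    have h1 := congrArg SemidirectProduct.left (hcen (cg φ))
    simp [cg, phi_apply₂ φ hφa hφb] at h1
    rcases q_cases (F (ag φ)).right.2 with ht | ht
    · exact ht
    · exfalso
      rw [ht, if_neg (by decide)] at h1
      have h2 := congrArg Prod.fst h1
      simp at h2
      rw [mul_comm ((F (ag φ)).left.1)] at h2
      have h3 := mul_right_cancel h2
      have h4 := congrArg toAdd h3
      simp at h4
      rw [eq_comm, neg_eq_iff_add_eq_zero] at h4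
      exact two_ne_zero' hp hodd (by rw [← one_add_one_eq_two]; exact h4)
  -- step 2 : left.1 = 1
  have hu : (F (ag φ)).left.1 = 1 := by
    have h1 := congrArg SemidirectProduct.left (hcen (bg φ))
    simp [bg, phi_apply₂ φ hφa hφb] at h1
    have h2 := congrArg Prod.fst h1
    simp at h2
    apply mul_self_one hp hodd
    nth_rewrite 1 [← h2]
    exact inv_mul_cancel _
  -- step 3 : left.2 = 1
  have hsq : F (ag φ) * F (ag φ) = 1 := by
    rw [← map_mul, ← pow_two, ag_sq, map_one]
  have hv : (F (ag φ)).left.2 = 1 := by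
    have h1 := congrArg SemidirectProduct.left hsq
    simp [phi_apply₂ φ hφa hφb, ht2] at h1
    have h2 := congrArg Prod.snd h1
    simp at h2
    exact mul_self_one hp hodd _ h2
  -- step 4 : right.1 = ofAdd 1
  have hs : (F (ag φ)).right.1 = ofAdd 1 := by
    rcases q_cases (F (ag φ)).right.1 with hs | hs
    · exfalso
      have h1 : F (ag φ) = 1 := by
        apply SemidirectProduct.ext
        · show (F (ag φ)).left = 1
          have : (F (ag φ)).left = ((F (ag φ)).left.1, (F (ag φ)).left.2) := rfl
          rw [this, hu, hv]; rfl
        · show (F (ag φ)).right = 1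
          have : (F (ag φ)).right = ((F (ag φ)).right.1, (F (ag φ)).right.2) := rfl
          rw [this, hs, ht2]; rfl
      have h2 : ag φ = 1 := F.injective (h1.trans (map_one F).symm)
      rw [ag, show (1 : Pp p ⋊[φ] Q2) = inr 1 from (map_one (inr : Q2 →* _)).symm,
        inr_inj] at h2
      exact (by decide : ((ofAdd 1, 1) : Q2) ≠ 1) h2
    · exact hs
  apply SemidirectProduct.ext
  · show (F (ag φ)).left = (ag φ).left
    have : (F (ag φ)).left = ((F (ag φ)).left.1, (F (ag φ)).left.2) := rfl
    rw [this, hu, hv]; rfl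
  · show (F (ag φ)).right = (ag φ).right
    have : (F (ag φ)).right = ((F (ag φ)).right.1, (F (ag φ)).right.2) := rfl
    rw [this, hs, ht2]; rfl

include hφa hφb hp hodd in
lemma Fb_eq (F : MulAut (Pp p ⋊[φ] Q2)) :
    F (bg φ) = ⟨(ofAdd (kPar φ F), 1), (sPar φ F, ofAdd 1)⟩ := by
  haveI : Fact p.Prime := ⟨hp⟩
  -- right.2 = ofAdd 1
  have ht2 : (F (bg φ)).right.2 = ofAdd 1 := by
    have h4 : F (bg φ) * F (cg φ) * (F (bg φ))⁻¹ = (F (cg φ))⁻¹ := by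
      rw [← map_inv, ← map_mul, ← map_mul, bcb φ hφa hφb, map_inv]
    rw [Fc_eq φ hφa hφb hp hodd F, conj_inl] at h4
    rw [show ((inl ((ofAdd (mPar φ F), 1) : Pp p))⁻¹ : Pp p ⋊[φ] Q2)
        = inl (((ofAdd (mPar φ F), 1) : Pp p))⁻¹ from
      (map_inv (inl : Pp p →* Pp p ⋊[φ] Q2) _).symm] at h4
    have h5 := inl_injective h4
    rw [phi_apply₂ φ hφa hφb] at h5
    rcases q_cases (F (bg φ)).right.2 with ht | ht
    · exfalso
      rw [ht, if_pos rfl] at h5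
      have h6 := congrArg Prod.fst h5
      simp at h6
      have h7 := congrArg toAdd h6
      simp at h7
      rw [eq_comm, neg_eq_iff_add_eq_zero] at h7
      exact mPar_ne φ hφa hφb hp hodd F (half_zero hp hodd _ h7)
    · exact ht
  -- left.2 = 1
  have hsq : F (bg φ) * F (bg φ) = 1 := by
    rw [← map_mul, ← pow_two, bg_sq, map_one]
  have hv : (F (bg φ)).left.2 = 1 := by
    have h1 := congrArg SemidirectProduct.left hsq
    simp [phi_apply₂ φ hφa hφb, ht2, if_neg (by decide : ¬ (ofAdd 1 : Multiplicative (ZMod 2)) = 1)] at h1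
    have h2 := congrArg Prod.snd h1
    simp at h2
    exact mul_self_one hp hodd _ h2
  apply SemidirectProduct.ext
  · show (F (bg φ)).left = _
    have : (F (bg φ)).left = ((F (bg φ)).left.1, (F (bg φ)).left.2) := rfl
    rw [this, hv]
    rfl
  · show (F (bg φ)).right = _
    have : (F (bg φ)).right = ((F (bg φ)).right.1, (F (bg φ)).right.2) := rfl
    rw [this, ht2]
    rfl

include hφa hφb hp hodd in
lemma F_inl_fst (F : MulAut (Pp p ⋊[φ] Q2)) (x : ZMod p) :
    F (inl (ofAdd x, 1)) = inl (ofAdd (mPar φ F * x), 1) := by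
  haveI : Fact p.Prime := ⟨hp⟩
  have hpow : ∀ (z : ZMod p) (v : ℕ), ((ofAdd z, 1) : Pp p) ^ v = (ofAdd ((v : ZMod p) * z), 1) := by
    intro z v
    ext
    · show toAdd ((ofAdd z) ^ v) = toAdd (ofAdd ((v : ZMod p) * z))
      rw [toAdd_pow]
      simp [nsmul_eq_mul]
    · simp [one_pow]
  have hc : (inl ((ofAdd x, 1) : Pp p) : Pp p ⋊[φ] Q2) = (cg φ) ^ x.val := by
    rw [cg, ← map_pow, hpow, ZMod.natCast_rightInverse x, mul_one]
  rw [hc, map_pow, Fc_eq φ hφa hφb hp hodd F, ← map_pow, hpow, ZMod.natCast_rightInverse x,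
    mul_comm]

include hφa hφb hp hodd in
lemma F_inl_snd (F : MulAut (Pp p ⋊[φ] Q2)) (y : ZMod p) :
    F (inl (1, ofAdd y)) = inl (1, ofAdd (nPar φ F * y)) := by
  haveI : Fact p.Prime := ⟨hp⟩
  have hpow : ∀ (z : ZMod p) (v : ℕ), ((1, ofAdd z) : Pp p) ^ v = (1, ofAdd ((v : ZMod p) * z)) := by
    intro z v
    ext
    · simp [one_pow]
    · show toAdd ((ofAdd z) ^ v) = toAdd (ofAdd ((v : ZMod p) * z))
      rw [toAdd_pow]
      simp [nsmul_eq_mul]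
  have hc : (inl ((1, ofAdd y) : Pp p) : Pp p ⋊[φ] Q2) = (dg φ) ^ y.val := by
    rw [dg, ← map_pow, hpow, ZMod.natCast_rightInverse y, mul_one]
  rw [hc, map_pow, Fd_eq φ hφa hφb hp hodd F, ← map_pow, hpow, ZMod.natCast_rightInverse y,
    mul_comm]

include hφa hφb hp hodd in
lemma F_inr_fst (F : MulAut (Pp p ⋊[φ] Q2)) (s : Multiplicative (ZMod 2)) :
    F (inr (s, 1)) = inr (s, 1) := by
  rcases q_cases s with hs | hs <;> subst hs
  · rw [show ((1, 1) : Q2) = 1 from rfl, map_one, map_one]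
  · exact Fa_eq φ hφa hφb hp hodd F

lemma decomp (g : Pp p ⋊[φ] Q2) :
    g = inl (g.left.1, 1) * inl (1, g.left.2) * (inr (g.right.1, 1) * inr (1, g.right.2)) := by
  rw [← map_mul, ← map_mul]
  have h1 : ((g.left.1, 1) : Pp p) * (1, g.left.2) = g.left := by
    ext <;> simp
  have h2 : ((g.right.1, 1) : Q2) * (1, g.right.2) = g.right := by
    ext <;> simp
  rw [h1, h2]
  exact (inl_left_mul_inr_right g).symm

set_option maxRecDepth 40000 in
include hφa hφb hp hodd in
lemma F_master (F : MulAut (Pp p ⋊[φ] Q2)) (g : Pp p ⋊[φ] Q2) :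
    F g = Fmap φ (mPar φ F) (nPar φ F) (kPar φ F) (sPar φ F) g := by
  conv_lhs => rw [decomp φ g]
  rw [map_mul, map_mul, map_mul, ← ofAdd_toAdd g.left.1, ← ofAdd_toAdd g.left.2,
    F_inl_fst φ hφa hφb hp hodd F, F_inl_snd φ hφa hφb hp hodd F,
    F_inr_fst φ hφa hφb hp hodd F]
  rcases q_cases g.right.2 with ht | ht
  · rw [ht]
    rw [show (inr ((1 : Multiplicative (ZMod 2)), (1 : Multiplicative (ZMod 2))) : Pp p ⋊[φ] Q2) = 1 from rfl,
      map_one]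
    apply SemidirectProduct.ext <;>
      simp [Fmap, ht, phi_apply₂ φ hφa hφb, ← ofAdd_add] <;>
      first
        | (constructor <;> first | ring1 | (congr 1 <;> ring1))
        | ring1
        | (congr 1 <;> ring1)
        | rfl
  · rw [ht, show (inr ((1 : Multiplicative (ZMod 2)), ofAdd (1 : ZMod 2)) : Pp p ⋊[φ] Q2) = bg φ from rfl,
      Fb_eq φ hφa hφb hp hodd F]
    apply SemidirectProduct.ext <;>
      simp [Fmap, ht, phi_apply₂ φ hφa hφb, ← ofAdd_add,
        (by decide : ¬ (ofAdd 1 : Multiplicative (ZMod 2)) = 1)] <;>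
      first
        | (constructor <;> first | ring1 | (congr 1 <;> ring1))
        | ring1
        | (congr 1 <;> ring1)
        | rfl

/-- evaluation of `Fmap` on generators -/
lemma Fmap_cg (m n k : ZMod p) (s : Multiplicative (ZMod 2)) :
    Fmap φ m n k s (cg φ) = inl (ofAdd m, 1) := by
  apply SemidirectProduct.ext <;> (try simp [Fmap, cg]) <;> rfl

lemma Fmap_dg (m n k : ZMod p) (s : Multiplicative (ZMod 2)) :
    Fmap φ m n k s (dg φ) = inl (1, ofAdd n) := by
  apply SemidirectProduct.ext <;> (try simp [Fmap, dg]) <;> rfl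

lemma Fmap_bg (m n k : ZMod p) (s : Multiplicative (ZMod 2)) :
    Fmap φ m n k s (bg φ) = ⟨(ofAdd k, 1), (s, ofAdd 1)⟩ := by
  apply SemidirectProduct.ext <;>
    (try simp [Fmap, bg, (by decide : ¬ (ofAdd 1 : Multiplicative (ZMod 2)) = 1)]) <;>
    try rfl

/-- the natural action of units on `Multiplicative (ZMod p)` -/
def unitsToAut : (ZMod p)ˣ →* MulAut (Multiplicative (ZMod p)) where
  toFun u :=
  { toFun := fun x => ofAdd ((u : ZMod p) * toAdd x)
    invFun := fun x => ofAdd ((↑u⁻¹ : ZMod p) * toAdd x)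
    left_inv := fun x => by simp [← mul_assoc, Units.inv_mul]
    right_inv := fun x => by simp [← mul_assoc, Units.mul_inv]
    map_mul' := fun x y => by
      rw [← ofAdd_add]
      show ofAdd ((u : ZMod p) * toAdd (x * y)) = ofAdd ((u : ZMod p) * toAdd x + (u : ZMod p) * toAdd y)
      rw [toAdd_mul, mul_add] }
  map_one' := by
    apply MulEquiv.ext
    intro x
    show ofAdd (((1 : (ZMod p)ˣ) : ZMod p) * toAdd x) = x
    simp
  map_mul' u v := by
    apply MulEquiv.ext
    intro x
    show ofAdd ((↑(u * v) : ZMod p) * toAdd x) = ofAdd ((u : ZMod p) * toAdd (ofAdd ((v : ZMod p) * toAdd x)))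
    simp [Units.val_mul, mul_assoc]

noncomputable def chi (hp : p.Prime) : Multiplicative (ZMod (p - 1)) ≃* (ZMod p)ˣ := by
  haveI : Fact p.Prime := ⟨hp⟩
  haveI : NeZero (p - 1) := ⟨by have := hp.two_le; omega⟩
  refine mulEquivOfCyclicCardEq ?_
  have h1 : Nat.card (Multiplicative (ZMod (p - 1))) = p - 1 := by
    simp only [Nat.card_eq_fintype_card, Fintype.card_multiplicative, ZMod.card]
  have h2 : Nat.card (ZMod p)ˣ = p - 1 := by
    simp [Nat.card_eq_fintype_card, ZMod.card_units_eq_totient, Nat.totient_prime hp]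
  rw [h1, h2]

noncomputable def psi0 (hp : p.Prime) :
    ((Multiplicative (ZMod (p - 1)) × Multiplicative (ZMod (p - 1))) ×
      Multiplicative (ZMod 2)) →* MulAut (Multiplicative (ZMod p)) :=
  unitsToAut.comp ((chi hp).toMonoidHom.comp ((MonoidHom.fst _ _).comp (MonoidHom.fst _ _)))

noncomputable def Psi (hp : p.Prime) :
    (Multiplicative (ZMod p) ⋊[psi0 hp]
      ((Multiplicative (ZMod (p - 1)) × Multiplicative (ZMod (p - 1))) ×
        Multiplicative (ZMod 2))) →* MulAut (Pp p ⋊[φ] Q2) where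
  toFun t := Fexp φ hφa hφb (chi hp t.right.1.1) (chi hp t.right.1.2) (toAdd t.left) t.right.2
  map_one' := by
    show Fexp φ hφa hφb (chi hp 1) (chi hp 1) (toAdd (1 : Multiplicative (ZMod p))) 1 = 1
    rw [map_one]
    apply MulEquiv.ext
    intro g
    show Fmap φ (↑(1 : (ZMod p)ˣ)) (↑(1 : (ZMod p)ˣ)) (toAdd (1 : Multiplicative (ZMod p))) 1 g = g
    rw [Units.val_one]
    show Fmap φ 1 1 0 1 g = g
    exact Fmap_id φ g
  map_mul' t t' := by
    show Fexp φ hφa hφb (chi hp (t.right.1.1 * t'.right.1.1)) (chi hp (t.right.1.2 * t'.right.1.2))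
      (toAdd t.left + ↑(chi hp t.right.1.1) * toAdd t'.left) (t.right.2 * t'.right.2) = _
    rw [map_mul, map_mul, Fexp_mul]
    congr 1
    ring

include hp hodd in
lemma Psi_injective : Function.Injective (Psi φ hφa hφb hp) := by
  intro t t' h
  have key : ∀ (w : Pp p ⋊[φ] Q2), Psi φ hφa hφb hp t w = Psi φ hφa hφb hp t' w := by
    intro w; rw [h]
  have hc := key (cg φ)
  have hd := key (dg φ)
  have hb := key (bg φ)
  simp only [show ∀ t'' , Psi φ hφa hφb hp t'' (cg φ) =
      Fmap φ (↑(chi hp t''.right.1.1)) (↑(chi hp t''.right.1.2)) (toAdd t''.left) t''.right.2 (cg φ)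
      from fun _ => rfl] at hc
  simp only [show ∀ t'' , Psi φ hφa hφb hp t'' (dg φ) =
      Fmap φ (↑(chi hp t''.right.1.1)) (↑(chi hp t''.right.1.2)) (toAdd t''.left) t''.right.2 (dg φ)
      from fun _ => rfl] at hd
  simp only [show ∀ t'' , Psi φ hφa hφb hp t'' (bg φ) =
      Fmap φ (↑(chi hp t''.right.1.1)) (↑(chi hp t''.right.1.2)) (toAdd t''.left) t''.right.2 (bg φ)
      from fun _ => rfl] at hb
  rw [Fmap_cg, Fmap_cg] at hc
  rw [Fmap_dg, Fmap_dg] at hd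
  rw [Fmap_bg, Fmap_bg] at hb
  -- extract equalities
  have hm : t.right.1.1 = t'.right.1.1 := by
    have h1 := inl_injective hc
    have h2 := congrArg (fun z : Pp p => toAdd z.1) h1
    simp at h2
    exact (chi hp).injective (Units.ext h2)
  have hn : t.right.1.2 = t'.right.1.2 := by
    have h1 := inl_injective hd
    have h2 := congrArg (fun z : Pp p => toAdd z.2) h1
    simp at h2
    exact (chi hp).injective (Units.ext h2)
  have hk : t.left = t'.left := by
    have h2 := congrArg (fun z : Pp p ⋊[φ] Q2 => toAdd z.left.1) hb
    simp at h2
    have : t.left = ofAdd (toAdd t.left) := rfl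
    rw [this, h2]; rfl
  have hs : t.right.2 = t'.right.2 := by
    have h2 := congrArg (fun z : Pp p ⋊[φ] Q2 => z.right.1) hb
    simpa using h2
  apply SemidirectProduct.ext
  · exact hk
  · apply Prod.ext
    · apply Prod.ext
      · exact hm
      · exact hn
    · exact hs

include hφa hφb hp hodd in
lemma Psi_surjective : Function.Surjective (Psi φ hφa hφb hp) := by
  haveI : Fact p.Prime := ⟨hp⟩
  intro F
  refine ⟨⟨ofAdd (kPar φ F),
    (((chi hp).symm (Units.mk0 (mPar φ F) (mPar_ne φ hφa hφb hp hodd F)),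
      (chi hp).symm (Units.mk0 (nPar φ F) (nPar_ne φ hφa hφb hp hodd F))),
      sPar φ F)⟩, ?_⟩
  apply MulEquiv.ext
  intro g
  show Fmap φ (↑(chi hp ((chi hp).symm (Units.mk0 (mPar φ F) _))))
    (↑(chi hp ((chi hp).symm (Units.mk0 (nPar φ F) _))))
    (toAdd (ofAdd (kPar φ F))) (sPar φ F) g = F g
  rw [MulEquiv.apply_symm_apply, MulEquiv.apply_symm_apply]
  rw [F_master φ hφa hφb hp hodd F g]
  rfl

end
end Stmt18

theorem stmt_18 (p : ℕ) (hp : p.Prime) (hodd : p ≠ 2)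
    (φ : Multiplicative (ZMod 2) × Multiplicative (ZMod 2) →*
      MulAut (Multiplicative (ZMod p) × Multiplicative (ZMod p)))
    (hφa : ∀ x : Multiplicative (ZMod p) × Multiplicative (ZMod p),
      φ (Multiplicative.ofAdd 1, 1) x = x)
    (hφb : ∀ x : Multiplicative (ZMod p) × Multiplicative (ZMod p),
      φ (1, Multiplicative.ofAdd 1) x = (x.1⁻¹, x.2)) :
    ∃ ψ : (Multiplicative (ZMod (p - 1)) × Multiplicative (ZMod (p - 1))) ×
        Multiplicative (ZMod 2) →* MulAut (Multiplicative (ZMod p)),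
      Nonempty
        (MulAut ((Multiplicative (ZMod p) × Multiplicative (ZMod p))
            ⋊[φ] (Multiplicative (ZMod 2) × Multiplicative (ZMod 2))) ≃*
          Multiplicative (ZMod p) ⋊[ψ]
            ((Multiplicative (ZMod (p - 1)) × Multiplicative (ZMod (p - 1))) ×
              Multiplicative (ZMod 2))) := by
  refine ⟨Stmt18.psi0 hp, ⟨?_⟩⟩
  exact (MulEquiv.ofBijective (Stmt18.Psi φ hφa hφb hp)
    ⟨Stmt18.Psi_injective φ hφa hφb hp hodd,
     Stmt18.Psi_surjective φ hφa hφb hp hodd⟩).symm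
end
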